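/- arXiv:0906.2484 — 6 statements merged into one kernel-verified Lean document; each statement's English description precedes it below -/
import Mathlib

section
/- For every δ ∈ (0,1/3], there exists a unique Borel measure μ on ℝ such that for all integers j, all integers n ≥ 0 and all integers 0 ≤ i < 3^n, μ([j + i·3^{−n}, j + (i+1)·3^{−n})) = δ^{n−k(i)} (1−2δ)^{k(i)}, where k(i) denotes the number of digits equal to 1 among the first n ternary (base-3) digits of i. -/
open MeasureTheory Set

noncomputable section

/-- The number of ternary (base-3) digits of `i` equal to `1`. For `i < 3 ^ n` this equals the
number of digits equal to `1` among the first `n` ternary digits of `i` (with leading zeros). -/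
def ternaryOnes (i : ℕ) : ℕ := (Nat.digits 3 i).count 1

/-- The measure `μ` assigns to each triadic interval `[j + i·3⁻ⁿ, j + (i+1)·3⁻ⁿ)`
(`j ∈ ℤ`, `n ≥ 0`, `0 ≤ i < 3 ^ n`) the mass `δ ^ (n - k(i)) * (1 - 2δ) ^ k(i)`,
where `k(i)` is the number of `1`s among the first `n` ternary digits of `i`. -/
def ternarySpec (δ : ℝ) (μ : Measure ℝ) : Prop :=
  ∀ (j : ℤ) (n i : ℕ), i < 3 ^ n →
    μ (Set.Ico ((j : ℝ) + (i : ℝ) / 3 ^ n) ((j : ℝ) + ((i : ℝ) + 1) / 3 ^ n)) =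
      ENNReal.ofReal (δ ^ (n - ternaryOnes i) * (1 - 2 * δ) ^ ternaryOnes i)

open Filter Topology

namespace TernaryAux

variable (δ : ℝ)

/-- Approximating sequence of CDFs. -/
def Gs : ℕ → ℝ → ℝ
  | 0 => fun x => max 0 (min x 1)
  | n+1 => fun x =>
      if x ≤ 1/3 then δ * Gs n (3*x)
      else if x ≤ 2/3 then δ + (1-2*δ) * Gs n (3*x - 1)
      else (1-δ) + δ * Gs n (3*x - 2)

lemma Gs_zero (x : ℝ) : Gs δ 0 x = max 0 (min x 1) := rfl

lemma Gs_succ (n : ℕ) (x : ℝ) : Gs δ (n+1) x =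
    if x ≤ 1/3 then δ * Gs δ n (3*x)
    else if x ≤ 2/3 then δ + (1-2*δ) * Gs δ n (3*x - 1)
    else (1-δ) + δ * Gs δ n (3*x - 2) := rfl

variable {δ}

lemma Gs_nonpos (n : ℕ) {x : ℝ} (hx : x ≤ 0) : Gs δ n x = 0 := by
  induction n generalizing x with
  | zero => rw [Gs_zero, min_eq_left (by linarith), max_eq_left hx]
  | succ n ih => rw [Gs_succ, if_pos (by linarith), ih (by linarith), mul_zero]

lemma Gs_one_le (n : ℕ) {x : ℝ} (hx : 1 ≤ x) : Gs δ n x = 1 := by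
  induction n generalizing x with
  | zero => rw [Gs_zero, min_eq_right hx, max_eq_right zero_le_one]
  | succ n ih =>
      rw [Gs_succ, if_neg (by push_neg; linarith), if_neg (by push_neg; linarith),
        ih (by linarith)]
      ring

section Bounds
variable (hδ0 : 0 < δ) (hδ : δ ≤ 1/3)
include hδ0 hδ

lemma Gs_nonneg (n : ℕ) (x : ℝ) : 0 ≤ Gs δ n x := by
  induction n generalizing x with
  | zero => exact le_max_left _ _
  | succ n ih =>
      rw [Gs_succ]
      split_ifs <;> nlinarith [ih (3*x), ih (3*x-1), ih (3*x-2)]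

lemma Gs_le_one (n : ℕ) (x : ℝ) : Gs δ n x ≤ 1 := by
  induction n generalizing x with
  | zero => exact max_le (by norm_num) (min_le_right _ _)
  | succ n ih =>
      rw [Gs_succ]
      split_ifs <;> nlinarith [ih (3*x), ih (3*x-1), ih (3*x-2),
        Gs_nonneg hδ0 hδ n (3*x), Gs_nonneg hδ0 hδ n (3*x-1), Gs_nonneg hδ0 hδ n (3*x-2)]

lemma Gs_mono (n : ℕ) : Monotone (Gs δ n) := by
  induction n with
  | zero => exact fun x y h => max_le_max le_rfl (min_le_min h le_rfl)
  | succ n ih =>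
      intro x y hxy
      rw [Gs_succ, Gs_succ]
      have h1 : ∀ z : ℝ, z ≤ 1/3 → δ * Gs δ n (3*z) ≤ δ := by
        intro z _; nlinarith [Gs_le_one hδ0 hδ n (3*z)]
      have h2 : ∀ z : ℝ, 1/3 ≤ z → δ ≤ δ + (1-2*δ) * Gs δ n (3*z-1) := by
        intro z _; nlinarith [Gs_nonneg hδ0 hδ n (3*z-1)]
      have h3 : ∀ z : ℝ, z ≤ 2/3 → δ + (1-2*δ) * Gs δ n (3*z-1) ≤ 1 - δ := by
        intro z _; nlinarith [Gs_le_one hδ0 hδ n (3*z-1)]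
      have h4 : ∀ z : ℝ, 2/3 ≤ z → 1 - δ ≤ (1-δ) + δ * Gs δ n (3*z-2) := by
        intro z _; nlinarith [Gs_nonneg hδ0 hδ n (3*z-2)]
      split_ifs with hx1 hy1 hy2 hx2 hy1' hy2' hy2''
      · nlinarith [ih (show (3*x : ℝ) ≤ 3*y by linarith)]
      · exact le_trans (h1 x hx1) (h2 y (by linarith))
      · exact le_trans (h1 x hx1) (le_trans (h2 y (by linarith)) (by
          nlinarith [Gs_le_one hδ0 hδ n (3*y-1), Gs_nonneg hδ0 hδ n (3*y-2), h4 y (by linarith)]))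
      · linarith
      · nlinarith [ih (show (3*x-1 : ℝ) ≤ 3*y-1 by linarith)]
      · exact le_trans (h3 x hx2) (h4 y (by linarith))
      · linarith
      · linarith
      · nlinarith [ih (show (3*x-2 : ℝ) ≤ 3*y-2 by linarith)]

end Bounds

-- branch lemmas valid on closed pieces
lemma Gs_left (n : ℕ) {x : ℝ} (hx : x ≤ 1/3) :
    Gs δ (n+1) x = δ * Gs δ n (3*x) := by
  rw [Gs_succ, if_pos hx]

lemma Gs_mid (n : ℕ) {x : ℝ} (hx : 1/3 ≤ x) (hx' : x ≤ 2/3) :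
    Gs δ (n+1) x = δ + (1-2*δ) * Gs δ n (3*x - 1) := by
  rcases eq_or_lt_of_le hx with h | h
  · rw [Gs_succ, if_pos h.symm.le, ← h]
    norm_num
    rw [Gs_one_le n (by norm_num), Gs_nonpos n (by norm_num)]
    ring
  · rw [Gs_succ, if_neg (by linarith), if_pos hx']

lemma Gs_right (n : ℕ) {x : ℝ} (hx : 2/3 ≤ x) :
    Gs δ (n+1) x = (1-δ) + δ * Gs δ n (3*x - 2) := by
  rcases eq_or_lt_of_le hx with h | h
  · rw [Gs_mid n (by linarith) h.symm.le, ← h]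
    norm_num
    rw [Gs_one_le n (by norm_num), Gs_nonpos n (by norm_num)]
    ring
  · rw [Gs_succ, if_neg (by linarith), if_neg (by linarith)]

lemma Gs_cont (n : ℕ) : Continuous (Gs δ n) := by
  induction n with
  | zero =>
      have h : Gs δ 0 = fun x => max 0 (min x 1) := funext (Gs_zero δ)
      rw [h]
      exact continuous_const.max ((continuous_id.min continuous_const))
  | succ n ih =>
      have h : Gs δ (n+1) = fun x =>
          if x ≤ 1/3 then δ * Gs δ n (3*x)
          else if x ≤ 2/3 then δ + (1-2*δ) * Gs δ n (3*x - 1)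
          else (1-δ) + δ * Gs δ n (3*x - 2) := funext (Gs_succ δ n)
      rw [h]
      apply Continuous.if_le
      · exact continuous_const.mul (ih.comp (by continuity))
      · apply Continuous.if_le
        · exact continuous_const.add (continuous_const.mul (ih.comp (by continuity)))
        · exact continuous_const.add (continuous_const.mul (ih.comp (by continuity)))
        · exact continuous_id
        · exact continuous_const
        · intro x hx
          rw [hx]
          norm_num
          rw [Gs_one_le n (by norm_num), Gs_nonpos n (by norm_num)]
          ring
      · exact continuous_id
      · exact continuous_const
      · intro x hx
        rw [hx, if_pos (by norm_num : (1:ℝ)/3 ≤ 2/3)]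
        norm_num
        rw [Gs_one_le n (by norm_num), Gs_nonpos n (by norm_num)]
        ring

lemma Gs_contract (hδ0 : 0 < δ) (hδ : δ ≤ 1/3) (n : ℕ) (x : ℝ) :
    |Gs δ (n+1) x - Gs δ n x| ≤ (max δ (1-2*δ))^n := by
  induction n generalizing x with
  | zero =>
      have h1 := Gs_nonneg hδ0 hδ 0 x
      have h2 := Gs_le_one hδ0 hδ 0 x
      have h3 := Gs_nonneg hδ0 hδ 1 x
      have h4 := Gs_le_one hδ0 hδ 1 x
      rw [pow_zero, abs_le]; constructor <;> linarith
  | succ n ih =>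
      have hρ1 : δ ≤ max δ (1-2*δ) := le_max_left _ _
      have hρ2 : 1-2*δ ≤ max δ (1-2*δ) := le_max_right _ _
      have hρ0 : (0:ℝ) ≤ max δ (1-2*δ) := le_trans hδ0.le hρ1
      rcases le_or_gt x (1/3) with h | h
      · rw [Gs_left n h, Gs_left (n+1) h, ← mul_sub, abs_mul, abs_of_pos hδ0, pow_succ]
        calc δ * |Gs δ (n+1) (3*x) - Gs δ n (3*x)| ≤ δ * (max δ (1-2*δ))^n :=
              mul_le_mul_of_nonneg_left (ih _) hδ0.le
          _ ≤ (max δ (1-2*δ))^n * (max δ (1-2*δ)) := by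
              rw [mul_comm]; exact mul_le_mul_of_nonneg_left hρ1 (pow_nonneg hρ0 n)
      · rcases le_or_gt x (2/3) with h' | h'
        · rw [Gs_mid n h.le h', Gs_mid (n+1) h.le h']
          have : δ + (1-2*δ) * Gs δ (n+1) (3*x-1) - (δ + (1-2*δ) * Gs δ n (3*x-1))
              = (1-2*δ) * (Gs δ (n+1) (3*x-1) - Gs δ n (3*x-1)) := by ring
          rw [this, abs_mul, abs_of_nonneg (by linarith), pow_succ]
          calc (1-2*δ) * |Gs δ (n+1) (3*x-1) - Gs δ n (3*x-1)| ≤ (1-2*δ) * (max δ (1-2*δ))^n :=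
                mul_le_mul_of_nonneg_left (ih _) (by linarith)
            _ ≤ (max δ (1-2*δ))^n * (max δ (1-2*δ)) := by
                rw [mul_comm]; exact mul_le_mul_of_nonneg_left hρ2 (pow_nonneg hρ0 n)
        · rw [Gs_right n h'.le, Gs_right (n+1) h'.le]
          have : (1-δ) + δ * Gs δ (n+1) (3*x-2) - ((1-δ) + δ * Gs δ n (3*x-2))
              = δ * (Gs δ (n+1) (3*x-2) - Gs δ n (3*x-2)) := by ring
          rw [this, abs_mul, abs_of_pos hδ0, pow_succ]
          calc δ * |Gs δ (n+1) (3*x-2) - Gs δ n (3*x-2)| ≤ δ * (max δ (1-2*δ))^n :=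
                mul_le_mul_of_nonneg_left (ih _) hδ0.le
            _ ≤ (max δ (1-2*δ))^n * (max δ (1-2*δ)) := by
                rw [mul_comm]; exact mul_le_mul_of_nonneg_left hρ1 (pow_nonneg hρ0 n)


lemma ternaryOnes_step (i : ℕ) :
    ternaryOnes i = (if i % 3 = 1 then 1 else 0) + ternaryOnes (i / 3) := by
  rcases Nat.eq_zero_or_pos i with rfl | hi
  · simp [ternaryOnes]
  · rw [ternaryOnes, Nat.digits_def' (by norm_num : 1 < 3) hi, List.count_cons]
    rw [ternaryOnes]
    have h : i % 3 = 0 ∨ i % 3 = 1 ∨ i % 3 = 2 := by omega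
    rcases h with h | h | h <;> simp [h, add_comm]

lemma ternaryOnes_le {n i : ℕ} (h : i < 3 ^ n) : ternaryOnes i ≤ n := by
  refine le_trans (List.count_le_length) ?_
  rcases Nat.eq_zero_or_pos i with rfl | hi
  · simp
  · by_contra hlen
    push_neg at hlen
    have h1 : 3 ^ (Nat.digits 3 i).length ≤ 3 * i :=
      Nat.base_pow_length_digits_le 3 i (by norm_num) hi.ne'
    have h2 : 3 ^ (n + 1) ≤ 3 ^ (Nat.digits 3 i).length :=
      Nat.pow_le_pow_right (by norm_num) hlen
    have h3 : 3 ^ (n + 1) = 3 * 3 ^ n := by ring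
    omega

lemma ternaryOnes_one_add {n r : ℕ} (h : r < 3 ^ n) :
    ternaryOnes (3 ^ n + r) = ternaryOnes r + 1 := by
  induction n generalizing r with
  | zero => interval_cases r <;> simp [ternaryOnes]
  | succ n ih =>
      have h3 : 3 ^ (n+1) + r = r + 3 ^ n * 3 := by ring
      rw [h3, ternaryOnes_step (r + 3 ^ n * 3)]
      rw [Nat.add_mul_mod_self_right, Nat.add_mul_div_right _ _ (by norm_num : 0 < 3)]
      have hr3 : r / 3 < 3 ^ n := Nat.div_lt_of_lt_mul (by rw [mul_comm]; rw [pow_succ] at h; exact h)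
      rw [show r / 3 + 3 ^ n = 3 ^ n + r / 3 by ring, ih hr3]
      rw [ternaryOnes_step r]
      ring

lemma ternaryOnes_two_add {n r : ℕ} (h : r < 3 ^ n) :
    ternaryOnes (2 * 3 ^ n + r) = ternaryOnes r := by
  induction n generalizing r with
  | zero => interval_cases r <;> simp [ternaryOnes]
  | succ n ih =>
      have h3 : 2 * 3 ^ (n+1) + r = r + (2 * 3 ^ n) * 3 := by ring
      rw [h3, ternaryOnes_step (r + (2 * 3 ^ n) * 3)]
      rw [Nat.add_mul_mod_self_right, Nat.add_mul_div_right _ _ (by norm_num : 0 < 3)]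
      have hr3 : r / 3 < 3 ^ n := Nat.div_lt_of_lt_mul (by rw [mul_comm]; rw [pow_succ] at h; exact h)
      rw [show r / 3 + 2 * 3 ^ n = 2 * 3 ^ n + r / 3 by ring, ih hr3]
      rw [ternaryOnes_step r]


section Limit
variable (hδ0 : 0 < δ) (hδ : δ ≤ 1/3)

lemma rho_nonneg (hδ0 : 0 < δ) (hδ : δ ≤ 1/3) : 0 ≤ max δ (1-2*δ) :=
  le_trans hδ0.le (le_max_left _ _)

lemma rho_lt_one (hδ0 : 0 < δ) (hδ : δ ≤ 1/3) : max δ (1-2*δ) < 1 :=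
  max_lt (by linarith) (by linarith)

include hδ0 hδ in
lemma summable_diff (x : ℝ) : Summable (fun n => Gs δ (n+1) x - Gs δ n x) :=
  Summable.of_norm_bounded (summable_geometric_of_lt_one (rho_nonneg hδ0 hδ)
    (rho_lt_one hδ0 hδ)) (fun n => Gs_contract hδ0 hδ n x)

/-- The limiting CDF on `[0,1]`. -/
def G (δ : ℝ) (x : ℝ) : ℝ := Gs δ 0 x + ∑' n, (Gs δ (n+1) x - Gs δ n x)

include hδ0 hδ in
lemma tendsto_Gs (x : ℝ) : Tendsto (fun n => Gs δ n x) atTop (𝓝 (G δ x)) := by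
  have h := (summable_diff hδ0 hδ x).hasSum.tendsto_sum_nat
  have heq : ∀ N, ∑ n ∈ Finset.range N, (Gs δ (n+1) x - Gs δ n x) = Gs δ N x - Gs δ 0 x :=
    fun N => Finset.sum_range_sub (fun n => Gs δ n x) N
  simp only [heq] at h
  have := h.add_const (Gs δ 0 x)
  simpa [G, sub_add_cancel, add_comm] using this

include hδ0 hδ in
lemma G_cont : Continuous (G δ) := by
  refine (Gs_cont 0).add (continuous_tsum (fun n => ((Gs_cont (n+1)).sub (Gs_cont n)))
    (summable_geometric_of_lt_one (rho_nonneg hδ0 hδ) (rho_lt_one hδ0 hδ)) ?_)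
  intro n x
  simpa [Real.norm_eq_abs] using Gs_contract hδ0 hδ n x

include hδ0 hδ in
lemma G_mono : Monotone (G δ) := fun x y hxy =>
  le_of_tendsto_of_tendsto' (tendsto_Gs hδ0 hδ x) (tendsto_Gs hδ0 hδ y)
    (fun n => Gs_mono hδ0 hδ n hxy)

include hδ0 hδ in
lemma G_nonpos {x : ℝ} (hx : x ≤ 0) : G δ x = 0 :=
  tendsto_nhds_unique (tendsto_Gs hδ0 hδ x)
    (by simpa [funext fun n => Gs_nonpos (δ := δ) n hx] using tendsto_const_nhds)

include hδ0 hδ in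
lemma G_one_le {x : ℝ} (hx : 1 ≤ x) : G δ x = 1 :=
  tendsto_nhds_unique (tendsto_Gs hδ0 hδ x)
    (by simpa [funext fun n => Gs_one_le (δ := δ) n hx] using tendsto_const_nhds)

include hδ0 hδ in
lemma G_nonneg (x : ℝ) : 0 ≤ G δ x :=
  ge_of_tendsto (tendsto_Gs hδ0 hδ x) (Eventually.of_forall fun n => Gs_nonneg hδ0 hδ n x)

include hδ0 hδ in
lemma G_le_one (x : ℝ) : G δ x ≤ 1 :=
  le_of_tendsto (tendsto_Gs hδ0 hδ x) (Eventually.of_forall fun n => Gs_le_one hδ0 hδ n x)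

/-- Stabilization of `Gs` at triadic points. -/
lemma Gs_stab : ∀ n : ℕ, ∀ i : ℕ, i ≤ 3 ^ n → ∀ m : ℕ,
    Gs δ (n + m) ((i : ℝ) / 3 ^ n) = Gs δ n ((i : ℝ) / 3 ^ n) := by
  intro n
  induction n with
  | zero =>
      intro i hi m
      interval_cases i
      · rw [Gs_nonpos (0 + m) (by norm_num), Gs_nonpos 0 (by norm_num)]
      · rw [Gs_one_le (0 + m) (by norm_num), Gs_one_le 0 (by norm_num)]
  | succ n ih =>
      intro i hi m
      have h3 : (0:ℝ) < (3:ℝ) ^ n := by positivity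
      have h3' : (0:ℝ) < (3:ℝ) ^ (n+1) := by positivity
      rcases le_or_gt i (3 ^ n) with hA | hA
      · -- left branch
        have hiR : (i : ℝ) ≤ 3 ^ n := by exact_mod_cast hA
        have hx : (i : ℝ) / 3 ^ (n+1) ≤ 1/3 := by
          rw [div_le_iff₀ h3', pow_succ]; nlinarith
        have h3x : 3 * ((i : ℝ) / 3 ^ (n+1)) = (i : ℝ) / 3 ^ n := by
          rw [pow_succ]; field_simp
        cases m with
        | zero => rfl
        | succ m =>
            rw [show n + 1 + (m+1) = (n + (m+1)) + 1 by omega, Gs_left _ hx, Gs_left _ hx, h3x,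
              ih i hA (m+1)]
      · rcases le_or_gt i (2 * 3 ^ n) with hB | hB
        · -- middle branch
          have hiR : (3:ℝ) ^ n ≤ (i : ℝ) := by exact_mod_cast hA.le
          have hiR' : (i : ℝ) ≤ 2 * 3 ^ n := by exact_mod_cast hB
          have hx : 1/3 ≤ (i : ℝ) / 3 ^ (n+1) := by
            rw [le_div_iff₀ h3', pow_succ]; nlinarith
          have hx' : (i : ℝ) / 3 ^ (n+1) ≤ 2/3 := by
            rw [div_le_iff₀ h3', pow_succ]; nlinarith
          have h3x : 3 * ((i : ℝ) / 3 ^ (n+1)) - 1 = ((i - 3 ^ n : ℕ) : ℝ) / 3 ^ n := by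
            rw [Nat.cast_sub hA.le, pow_succ]
            push_cast
            field_simp
          have hsub : i - 3 ^ n ≤ 3 ^ n := by omega
          cases m with
          | zero => rfl
          | succ m =>
              rw [show n + 1 + (m+1) = (n + (m+1)) + 1 by omega, Gs_mid _ hx hx',
                Gs_mid _ hx hx', h3x, ih _ hsub (m+1)]
        · -- right branch
          have hiR : 2 * (3:ℝ) ^ n ≤ (i : ℝ) := by exact_mod_cast hB.le
          have hx : 2/3 ≤ (i : ℝ) / 3 ^ (n+1) := by
            rw [le_div_iff₀ h3', pow_succ]; nlinarith
          have h2B : 2 * 3 ^ n ≤ i := hB.le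
          have h3x : 3 * ((i : ℝ) / 3 ^ (n+1)) - 2 = ((i - 2 * 3 ^ n : ℕ) : ℝ) / 3 ^ n := by
            rw [Nat.cast_sub h2B, pow_succ]
            push_cast
            field_simp
          have hsub : i - 2 * 3 ^ n ≤ 3 ^ n := by
            have : i ≤ 3 ^ (n+1) := hi
            have : 3 ^ (n+1) = 3 * 3 ^ n := by ring
            omega
          cases m with
          | zero => rfl
          | succ m =>
              rw [show n + 1 + (m+1) = (n + (m+1)) + 1 by omega, Gs_right _ hx,
                Gs_right _ hx, h3x, ih _ hsub (m+1)]

include hδ0 hδ in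
lemma G_triadic {n i : ℕ} (hi : i ≤ 3 ^ n) : G δ ((i : ℝ) / 3 ^ n) = Gs δ n ((i : ℝ) / 3 ^ n) := by
  refine tendsto_nhds_unique (tendsto_Gs hδ0 hδ _) ?_
  refine Tendsto.congr' ?_ (tendsto_const_nhds (x := Gs δ n ((i : ℝ) / 3 ^ n)))
  filter_upwards [eventually_ge_atTop n] with m hm
  have := Gs_stab (δ := δ) n i hi (m - n)
  rw [Nat.add_sub_cancel' hm] at this
  exact this.symm

end Limit

lemma Gs_incr : ∀ n : ℕ, ∀ i : ℕ, i < 3 ^ n →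
    Gs δ n (((i : ℝ) + 1) / 3 ^ n) - Gs δ n ((i : ℝ) / 3 ^ n) =
      δ ^ (n - ternaryOnes i) * (1 - 2*δ) ^ (ternaryOnes i) := by
  intro n
  induction n with
  | zero =>
      intro i hi
      interval_cases i
      simp [Gs_zero, ternaryOnes]
  | succ n ih =>
      intro i hi
      have h3 : (0:ℝ) < (3:ℝ) ^ n := by positivity
      have h3' : (0:ℝ) < (3:ℝ) ^ (n+1) := by positivity
      have hps : ((3:ℝ)) ^ (n+1) = 3 * 3 ^ n := by ring
      rcases lt_or_ge i (3 ^ n) with hA | hA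
      · have hiR : (i : ℝ) + 1 ≤ 3 ^ n := by
          have : (i : ℝ) + 1 ≤ ((3:ℕ) ^ n : ℕ) := by exact_mod_cast Nat.succ_le_of_lt hA
          simpa using this
        have hx : (i : ℝ) / 3 ^ (n+1) ≤ 1/3 := by
          rw [div_le_iff₀ h3', hps]; nlinarith
        have hx' : ((i : ℝ) + 1) / 3 ^ (n+1) ≤ 1/3 := by
          rw [div_le_iff₀ h3', hps]; nlinarith
        have e1 : 3 * ((i : ℝ) / 3 ^ (n+1)) = (i : ℝ) / 3 ^ n := by
          rw [hps]; field_simp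
        have e2 : 3 * (((i : ℝ) + 1) / 3 ^ (n+1)) = ((i : ℝ) + 1) / 3 ^ n := by
          rw [hps]; field_simp
        rw [Gs_left _ hx, Gs_left _ hx', e1, e2, ← mul_sub, ih i hA]
        have hk : ternaryOnes i ≤ n := ternaryOnes_le hA
        rw [show n + 1 - ternaryOnes i = (n - ternaryOnes i) + 1 by omega, pow_succ]
        ring
      · rcases lt_or_ge i (2 * 3 ^ n) with hB | hB
        · set r := i - 3 ^ n with hr
          have hir : i = 3 ^ n + r := by omega
          have hrlt : r < 3 ^ n := by omega
          have hcast : (i : ℝ) = 3 ^ n + (r : ℝ) := by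
            rw [hir]; push_cast; ring
          have hx1 : 1/3 ≤ (i : ℝ) / 3 ^ (n+1) := by
            rw [le_div_iff₀ h3', hps, hcast]; nlinarith [Nat.cast_nonneg (α := ℝ) r]
          have hx2 : (i : ℝ) / 3 ^ (n+1) ≤ 2/3 := by
            rw [div_le_iff₀ h3', hps, hcast]
            have : (r:ℝ) ≤ 3 ^ n := by exact_mod_cast hrlt.le
            nlinarith
          have hx1' : 1/3 ≤ ((i : ℝ) + 1) / 3 ^ (n+1) := by
            rw [le_div_iff₀ h3', hps, hcast]; nlinarith [Nat.cast_nonneg (α := ℝ) r]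
          have hx2' : ((i : ℝ) + 1) / 3 ^ (n+1) ≤ 2/3 := by
            rw [div_le_iff₀ h3', hps, hcast]
            have : (r:ℝ) + 1 ≤ 3 ^ n := by exact_mod_cast Nat.succ_le_of_lt hrlt
            nlinarith
          have e1 : 3 * ((i : ℝ) / 3 ^ (n+1)) - 1 = (r : ℝ) / 3 ^ n := by
            rw [hps, hcast]; field_simp; ring
          have e2 : 3 * (((i : ℝ) + 1) / 3 ^ (n+1)) - 1 = ((r : ℝ) + 1) / 3 ^ n := by
            rw [hps, hcast]; field_simp; ring
          rw [Gs_mid _ hx1 hx2, Gs_mid _ hx1' hx2', e1, e2]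
          have : δ + (1-2*δ) * Gs δ n (((r:ℝ)+1)/3^n) - (δ + (1-2*δ) * Gs δ n ((r:ℝ)/3^n))
              = (1-2*δ) * (Gs δ n (((r:ℝ)+1)/3^n) - Gs δ n ((r:ℝ)/3^n)) := by ring
          rw [this, ih r hrlt, hir, ternaryOnes_one_add hrlt]
          have hk : ternaryOnes r ≤ n := ternaryOnes_le hrlt
          rw [show n + 1 - (ternaryOnes r + 1) = n - ternaryOnes r by omega, pow_succ]
          ring
        · set r := i - 2 * 3 ^ n with hr
          have hir : i = 2 * 3 ^ n + r := by omega
          have hrlt : r < 3 ^ n := by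
            have : 3 ^ (n+1) = 3 * 3 ^ n := by ring
            omega
          have hcast : (i : ℝ) = 2 * 3 ^ n + (r : ℝ) := by
            rw [hir]; push_cast; ring
          have hx1 : 2/3 ≤ (i : ℝ) / 3 ^ (n+1) := by
            rw [le_div_iff₀ h3', hps, hcast]; nlinarith [Nat.cast_nonneg (α := ℝ) r]
          have hx1' : 2/3 ≤ ((i : ℝ) + 1) / 3 ^ (n+1) := by
            rw [le_div_iff₀ h3', hps, hcast]; nlinarith [Nat.cast_nonneg (α := ℝ) r]
          have e1 : 3 * ((i : ℝ) / 3 ^ (n+1)) - 2 = (r : ℝ) / 3 ^ n := by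
            rw [hps, hcast]; field_simp; ring
          have e2 : 3 * (((i : ℝ) + 1) / 3 ^ (n+1)) - 2 = ((r : ℝ) + 1) / 3 ^ n := by
            rw [hps, hcast]; field_simp; ring
          rw [Gs_right _ hx1, Gs_right _ hx1', e1, e2]
          have : (1-δ) + δ * Gs δ n (((r:ℝ)+1)/3^n) - ((1-δ) + δ * Gs δ n ((r:ℝ)/3^n))
              = δ * (Gs δ n (((r:ℝ)+1)/3^n) - Gs δ n ((r:ℝ)/3^n)) := by ring
          rw [this, ih r hrlt, hir, ternaryOnes_two_add hrlt]
          have hk : ternaryOnes r ≤ n := ternaryOnes_le hrlt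
          rw [show n + 1 - ternaryOnes r = (n - ternaryOnes r) + 1 by omega, pow_succ]
          ring

variable (hδ0 : 0 < δ) (hδ : δ ≤ 1/3)

/-- The global CDF as a Stieltjes function. -/
def F (hδ0 : 0 < δ) (hδ : δ ≤ 1/3) : StieltjesFunction ℝ where
  toFun x := (⌊x⌋ : ℝ) + G δ (x - ⌊x⌋)
  mono' := by
    intro x y hxy
    rcases eq_or_lt_of_le (Int.floor_mono hxy) with h | h
    · simp only [← h]
      exact add_le_add_right (G_mono hδ0 hδ (by linarith)) _
    · have h1 : G δ (x - ⌊x⌋) ≤ 1 := G_le_one hδ0 hδ _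
      have h2 : 0 ≤ G δ (y - ⌊y⌋) := G_nonneg hδ0 hδ _
      have h3 : (⌊x⌋ : ℝ) + 1 ≤ (⌊y⌋ : ℝ) := by exact_mod_cast h
      show (⌊x⌋ : ℝ) + G δ (x - ⌊x⌋) ≤ (⌊y⌋ : ℝ) + G δ (y - ⌊y⌋)
      linarith
  right_continuous' := by
    intro x
    set m : ℤ := ⌊x⌋ with hm
    have hx1 : x < (m : ℝ) + 1 := Int.lt_floor_add_one x
    have hx0 : (m : ℝ) ≤ x := Int.floor_le x
    have hH : Continuous (fun y : ℝ => (m : ℝ) + G δ (y - m)) :=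
      continuous_const.add ((G_cont hδ0 hδ).comp (by continuity))
    refine (hH.continuousAt.continuousWithinAt).congr_of_eventuallyEq ?_ (by rw [← hm])
    filter_upwards [Ico_mem_nhdsGE_of_mem (⟨le_refl x, hx1⟩ : x ∈ Ico x ((m:ℝ)+1))] with y hy
    have : ⌊y⌋ = m := by
      rw [Int.floor_eq_iff]; exact ⟨le_trans hx0 hy.1, hy.2⟩
    simp only [this]

lemma F_eval {j : ℤ} {t : ℝ} (h0 : 0 ≤ t) (h1 : t ≤ 1) :
    F hδ0 hδ ((j : ℝ) + t) = (j : ℝ) + G δ t := by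
  rcases lt_or_eq_of_le h1 with h | h
  · have hfl : ⌊(j : ℝ) + t⌋ = j := by
      rw [add_comm, Int.floor_add_intCast, Int.floor_eq_zero_iff.mpr ⟨h0, h⟩, zero_add]
    show (⌊(j:ℝ) + t⌋ : ℝ) + G δ ((j:ℝ) + t - ⌊(j:ℝ) + t⌋) = (j : ℝ) + G δ t
    rw [hfl]
    ring_nf
  · subst h
    have hfl : ⌊(j : ℝ) + 1⌋ = j + 1 := by
      rw [show ((j:ℝ) + 1) = ((j + 1 : ℤ) : ℝ) by push_cast; ring, Int.floor_intCast]
    show (⌊(j:ℝ) + 1⌋ : ℝ) + G δ ((j:ℝ) + 1 - ⌊(j:ℝ) + 1⌋) = (j : ℝ) + G δ 1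
    rw [hfl, G_one_le hδ0 hδ le_rfl]
    push_cast
    rw [G_nonpos hδ0 hδ (le_of_eq (by ring) : (j:ℝ) + 1 - ((j:ℝ) + 1) ≤ 0)]
    ring

lemma F_leftLim (x : ℝ) : Function.leftLim (F hδ0 hδ) x = F hδ0 hδ x := by
  set m : ℤ := ⌈x⌉ - 1 with hm
  have hm1 : (m : ℝ) < x := by
    rw [hm]
    push_cast
    have := Int.ceil_lt_add_one x
    linarith
  have hm2 : x ≤ (m : ℝ) + 1 := by
    rw [hm]
    push_cast
    have := Int.le_ceil x
    linarith
  set H : ℝ → ℝ := fun y => (m : ℝ) + G δ (y - m) with hH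
  have hFH : ∀ y ∈ Ioc (m : ℝ) ((m : ℝ) + 1), F hδ0 hδ y = H y := by
    intro y hy
    rcases lt_or_eq_of_le hy.2 with h | h
    · have hfl : ⌊y⌋ = m := by rw [Int.floor_eq_iff]; exact ⟨hy.1.le, h⟩
      show (⌊y⌋ : ℝ) + G δ (y - ⌊y⌋) = H y
      rw [hfl]
    · subst h
      show (⌊(m:ℝ) + 1⌋ : ℝ) + G δ ((m:ℝ) + 1 - ⌊(m:ℝ)+1⌋) = H ((m:ℝ)+1)
      have hfl : ⌊(m : ℝ) + 1⌋ = m + 1 := by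
        rw [show ((m:ℝ) + 1) = ((m + 1 : ℤ) : ℝ) by push_cast; ring, Int.floor_intCast]
      rw [hfl, hH]
      simp only
      rw [G_one_le hδ0 hδ (by push_cast; norm_num : (1:ℝ) ≤ (m:ℝ) + 1 - (m:ℝ))]
      push_cast
      rw [G_nonpos hδ0 hδ (le_of_eq (by ring) : (m:ℝ) + 1 - ((m:ℝ) + 1) ≤ 0)]
      ring
  have hHc : Continuous H := continuous_const.add ((G_cont hδ0 hδ).comp (by continuity))
  refine leftLim_eq_of_tendsto ?_
  have hx : F hδ0 hδ x = H x := hFH x ⟨hm1, hm2⟩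
  rw [hx]
  refine Tendsto.congr' ?_ (hHc.continuousAt.continuousWithinAt.tendsto)
  filter_upwards [Ioo_mem_nhdsLT_of_mem (⟨hm1, le_refl x⟩ : x ∈ Ioc (m:ℝ) x)] with y hy
  exact (hFH y ⟨hy.1, le_trans hy.2.le hm2⟩).symm

theorem F_spec : ternarySpec δ (F hδ0 hδ).measure := by
  intro j n i hi
  have h3 : (0:ℝ) < (3:ℝ) ^ n := by positivity
  have hi1 : ((i : ℝ) + 1) / 3 ^ n ≤ 1 := by
    rw [div_le_one h3]
    have : (i : ℝ) + 1 ≤ ((3 ^ n : ℕ) : ℝ) := by exact_mod_cast Nat.succ_le_of_lt hi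
    simpa using this
  have hi0 : (0:ℝ) ≤ (i : ℝ) / 3 ^ n := by positivity
  have hii : (i : ℝ) / 3 ^ n ≤ ((i : ℝ) + 1) / 3 ^ n := by
    gcongr
    linarith
  rw [StieltjesFunction.measure_Ico, F_leftLim hδ0 hδ, F_leftLim hδ0 hδ]
  rw [F_eval hδ0 hδ hi0 (le_trans hii hi1), F_eval hδ0 hδ (by positivity) hi1]
  have hcast : ((i : ℝ) + 1) = (((i + 1 : ℕ) : ℝ)) := by push_cast; ring
  have hG1 : G δ (((i : ℝ) + 1) / 3 ^ n) = Gs δ n (((i : ℝ) + 1) / 3 ^ n) := by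
    rw [hcast]; exact G_triadic hδ0 hδ (by exact_mod_cast Nat.succ_le_of_lt hi)
  have hG0 : G δ ((i : ℝ) / 3 ^ n) = Gs δ n ((i : ℝ) / 3 ^ n) :=
    G_triadic hδ0 hδ hi.le
  rw [show (j:ℝ) + G δ (((i : ℝ) + 1) / 3 ^ n) - ((j:ℝ) + G δ ((i : ℝ) / 3 ^ n))
      = G δ (((i : ℝ) + 1) / 3 ^ n) - G δ ((i : ℝ) / 3 ^ n) by ring,
    hG1, hG0, Gs_incr n i hi]


/-- All triadic intervals. -/
def triadic : Set (Set ℝ) :=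
  {S | ∃ n : ℕ, ∃ m : ℤ, S = Ico ((m : ℝ) / 3 ^ n) (((m : ℝ) + 1) / 3 ^ n)}

lemma triadic_countable : triadic.Countable := by
  have : triadic = (fun p : ℕ × ℤ => Ico ((p.2 : ℝ) / 3 ^ p.1) (((p.2 : ℝ) + 1) / 3 ^ p.1)) ''
      univ := by
    ext S
    simp only [triadic, mem_setOf_eq, image_univ, mem_range, Prod.exists]
    constructor
    · rintro ⟨n, m, rfl⟩; exact ⟨n, m, rfl⟩
    · rintro ⟨n, m, rfl⟩; exact ⟨n, m, rfl⟩
  rw [this]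
  exact (countable_univ).image _

/-- Nested or disjoint. -/
lemma triadic_subset {n n' : ℕ} {m m' : ℤ} (hnn : n ≤ n')
    (hne : (Ico ((m : ℝ) / 3 ^ n) (((m : ℝ) + 1) / 3 ^ n) ∩
      Ico ((m' : ℝ) / 3 ^ n') (((m' : ℝ) + 1) / 3 ^ n')).Nonempty) :
    Ico ((m' : ℝ) / 3 ^ n') (((m' : ℝ) + 1) / 3 ^ n') ⊆
      Ico ((m : ℝ) / 3 ^ n) (((m : ℝ) + 1) / 3 ^ n) := by
  obtain ⟨x, hx1, hx2⟩ := hne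
  have h3 : (0:ℝ) < (3:ℝ) ^ n := by positivity
  have h3' : (0:ℝ) < (3:ℝ) ^ n' := by positivity
  have hpow : (3:ℝ) ^ n' = 3 ^ n * 3 ^ (n' - n) := by
    rw [← pow_add]
    congr 1
    omega
  have hD : (0:ℝ) < (3:ℝ) ^ (n' - n) := by positivity
  have hDZ : ((3 ^ (n' - n) : ℤ) : ℝ) = (3:ℝ) ^ (n' - n) := by push_cast; ring
  -- a ≤ x < b' gives m * D < m' + 1
  have h1 : (m : ℝ) / 3 ^ n < ((m' : ℝ) + 1) / 3 ^ n' := lt_of_le_of_lt hx1.1 hx2.2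
  have h2 : (m' : ℝ) / 3 ^ n' < ((m : ℝ) + 1) / 3 ^ n := lt_of_le_of_lt hx2.1 hx1.2
  have hint1 : m * 3 ^ (n' - n) < m' + 1 := by
    have := (div_lt_div_iff₀ h3 h3').mp h1
    rw [hpow] at this
    have h' : (m : ℝ) * 3 ^ (n' - n) < (m' : ℝ) + 1 := by
      have h3n : (0:ℝ) < (3:ℝ)^n := h3
      nlinarith
    exact_mod_cast (by push_cast; rw [hDZ] at *; exact_mod_cast h' : ((m * 3 ^ (n' - n) : ℤ) : ℝ) < ((m' + 1 : ℤ) : ℝ))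
  have hint2 : m' < (m + 1) * 3 ^ (n' - n) := by
    have := (div_lt_div_iff₀ h3' h3).mp h2
    rw [hpow] at this
    have h' : (m' : ℝ) < ((m : ℝ) + 1) * 3 ^ (n' - n) := by nlinarith
    exact_mod_cast (by push_cast; rw [hDZ] at *; exact_mod_cast h' : ((m' : ℤ) : ℝ) < (((m + 1) * 3 ^ (n' - n) : ℤ) : ℝ))
  have hle1 : m * 3 ^ (n' - n) ≤ m' := by omega
  have hle2 : m' + 1 ≤ (m + 1) * 3 ^ (n' - n) := by omega
  apply Ico_subset_Ico
  · rw [div_le_div_iff₀ h3 h3', hpow]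
    have : (m : ℝ) * 3 ^ (n' - n) ≤ (m' : ℝ) := by exact_mod_cast (by exact_mod_cast hle1 : ((m * 3 ^ (n' - n) : ℤ) : ℝ) ≤ ((m' : ℤ) : ℝ))
    nlinarith
  · rw [div_le_div_iff₀ h3' h3, hpow]
    have : (m' : ℝ) + 1 ≤ ((m : ℝ) + 1) * 3 ^ (n' - n) := by
      exact_mod_cast (by exact_mod_cast hle2 : ((m' + 1 : ℤ) : ℝ) ≤ (((m + 1) * 3 ^ (n' - n) : ℤ) : ℝ))
    nlinarith

lemma triadic_pi : IsPiSystem triadic := by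
  rintro s ⟨n, m, rfl⟩ t ⟨n', m', rfl⟩ hst
  rcases le_total n n' with h | h
  · rw [inter_eq_self_of_subset_right (triadic_subset h hst)]
    exact ⟨n', m', rfl⟩
  · rw [inter_comm] at hst ⊢
    rw [inter_eq_self_of_subset_right (triadic_subset h hst)]
    exact ⟨n, m, rfl⟩

lemma triadic_gen : (inferInstance : MeasurableSpace ℝ) = .generateFrom triadic := by
  refine le_antisymm ?_ (MeasurableSpace.generateFrom_le ?_)
  swap
  · rintro _ ⟨n, m, rfl⟩
    exact measurableSet_Ico
  rw [BorelSpace.measurable_eq (α := ℝ), Real.borel_eq_generateFrom_Ioo_rat]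
  refine MeasurableSpace.generateFrom_le ?_
  rintro _ hS
  simp only [mem_iUnion] at hS
  obtain ⟨a, b, hab, rfl⟩ := hS
  have key : (Ioo (a : ℝ) (b : ℝ)) = ⋃₀ {S | S ∈ triadic ∧ S ⊆ Ioo (a : ℝ) b} := by
    apply Subset.antisymm
    · intro x hx
      have hε : (0:ℝ) < min (x - a) (b - x) := by
        simp only [mem_Ioo] at hx
        apply lt_min <;> linarith
      obtain ⟨n, hn⟩ := exists_pow_lt_of_lt_one hε (by norm_num : (1:ℝ)/3 < 1)
      have h3 : (0:ℝ) < (3:ℝ) ^ n := by positivity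
      have hn' : 1 / (3:ℝ) ^ n < min (x - a) (b - x) := by
        rwa [one_div_pow] at hn
      set m : ℤ := ⌊x * 3 ^ n⌋ with hm
      have hfl1 : (m : ℝ) ≤ x * 3 ^ n := Int.floor_le _
      have hfl2 : x * 3 ^ n < (m : ℝ) + 1 := Int.lt_floor_add_one _
      refine ⟨Ico ((m : ℝ) / 3 ^ n) (((m : ℝ) + 1) / 3 ^ n), ⟨⟨n, m, rfl⟩, ?_⟩, ?_⟩
      · intro y hy
        simp only [mem_Ioo]
        constructor
        · have he : 1 / (3:ℝ) ^ n * 3 ^ n = 1 := by field_simp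
          have : x - 1 / 3 ^ n < (m : ℝ) / 3 ^ n := by
            rw [lt_div_iff₀ h3, sub_mul, he]
            linarith
          have := lt_of_lt_of_le this hy.1
          have hxa : 1 / (3:ℝ) ^ n < x - a := lt_of_lt_of_le hn' (min_le_left _ _)
          linarith
        · have he : 1 / (3:ℝ) ^ n * 3 ^ n = 1 := by field_simp
          have : ((m : ℝ) + 1) / 3 ^ n ≤ x + 1 / 3 ^ n := by
            rw [div_le_iff₀ h3, add_mul, he]
            linarith
          have := lt_of_lt_of_le hy.2 this
          have hxb : 1 / (3:ℝ) ^ n < b - x := lt_of_lt_of_le hn' (min_le_right _ _)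
          linarith
      · constructor
        · rw [div_le_iff₀ h3]; linarith
        · rw [lt_div_iff₀ h3]; linarith
    · rintro x ⟨S, ⟨_, hsub⟩, hx⟩
      exact hsub hx
  rw [key]
  refine MeasurableSet.sUnion (triadic_countable.mono (fun S hS => hS.1)) ?_
  rintro S ⟨hS, _⟩
  exact MeasurableSpace.measurableSet_generateFrom hS

/-- Value of a spec measure on a triadic interval. -/
lemma spec_value {δ : ℝ} {μ : Measure ℝ} (hμ : ternarySpec δ μ) (n : ℕ) (m : ℤ) :
    μ (Ico ((m : ℝ) / 3 ^ n) (((m : ℝ) + 1) / 3 ^ n)) =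
      ENNReal.ofReal (δ ^ (n - ternaryOnes (m % (3 ^ n : ℤ)).toNat) *
        (1 - 2 * δ) ^ ternaryOnes (m % (3 ^ n : ℤ)).toNat) := by
  have hpow : (0:ℤ) < 3 ^ n := by positivity
  have hmod0 : 0 ≤ m % (3 ^ n : ℤ) := Int.emod_nonneg m (by positivity)
  have hmodlt : m % (3 ^ n : ℤ) < 3 ^ n := Int.emod_lt_of_pos m hpow
  have hcast3 : ((3 ^ n : ℕ) : ℤ) = (3 : ℤ) ^ n := by push_cast; ring
  have hilt : (m % (3 ^ n : ℤ)).toNat < 3 ^ n := by omega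
  have hZ : m = 3 ^ n * (m / (3 ^ n : ℤ)) + ((m % (3 ^ n : ℤ)).toNat : ℤ) := by
    rw [Int.toNat_of_nonneg hmod0]
    linarith [Int.mul_ediv_add_emod m (3 ^ n : ℤ)]
  have h3R : (0:ℝ) < (3:ℝ) ^ n := by positivity
  have hmR : (m : ℝ) = 3 ^ n * ((m / (3 ^ n : ℤ) : ℤ) : ℝ) + (((m % (3 ^ n : ℤ)).toNat : ℕ) : ℝ) := by
    exact_mod_cast congrArg (Int.cast : ℤ → ℝ) hZ
  have e1 : (m : ℝ) / 3 ^ n = (((m / (3 ^ n : ℤ) : ℤ) : ℝ)) + (((m % (3 ^ n : ℤ)).toNat : ℕ) : ℝ) / 3 ^ n := by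
    rw [hmR]; field_simp
  have e2 : ((m : ℝ) + 1) / 3 ^ n = (((m / (3 ^ n : ℤ) : ℤ) : ℝ)) + ((((m % (3 ^ n : ℤ)).toNat : ℕ) : ℝ) + 1) / 3 ^ n := by
    rw [hmR]; field_simp; ring
  rw [e1, e2]
  exact hμ (m / (3 ^ n : ℤ)) n ((m % (3 ^ n : ℤ)).toNat) hilt

/-- Uniqueness. -/
lemma spec_unique {δ : ℝ} {μ ν : Measure ℝ}
    (hμ : ternarySpec δ μ) (hν : ternarySpec δ ν) : μ = ν := by
  refine Measure.ext_of_generateFrom_of_cover_subset triadic_gen triadic_pi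
    (T := range (fun j : ℤ => Ico (j : ℝ) ((j : ℝ) + 1))) ?_ (countable_range _) ?_ ?_ ?_
  · rintro _ ⟨j, rfl⟩
    exact ⟨0, j, by norm_num⟩
  · apply eq_univ_of_forall
    intro x
    exact ⟨Ico ((⌊x⌋ : ℝ)) ((⌊x⌋ : ℝ) + 1), ⟨⌊x⌋, rfl⟩, Int.floor_le x, Int.lt_floor_add_one x⟩
  · rintro _ ⟨j, rfl⟩
    have := hμ j 0 0 (by norm_num)
    simp only [pow_zero, Nat.cast_zero, zero_div, add_zero, zero_add, div_one] at this
    rw [this]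
    exact ENNReal.ofReal_ne_top
  · rintro s ⟨n, m, rfl⟩
    rw [spec_value hμ, spec_value hν]


end TernaryAux

/-- For every `δ ∈ (0, 1/3]` there is a unique Borel measure on `ℝ` satisfying the triadic
mass assignment `μ([j + i·3⁻ⁿ, j + (i+1)·3⁻ⁿ)) = δ^(n-k(i)) (1-2δ)^(k(i))`. -/
theorem exists_unique_ternary_measure (δ : ℝ) (hδ0 : 0 < δ) (hδ : δ ≤ 1 / 3) :
    ∃! μ : Measure ℝ, ternarySpec δ μ :=
  ⟨(TernaryAux.F hδ0 hδ).measure, TernaryAux.F_spec hδ0 hδ,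
    fun ν hν => TernaryAux.spec_unique hν (TernaryAux.F_spec hδ0 hδ)⟩
end
end

section
/- Fix δ ∈ (0,1/3] and let μ be the Borel measure on ℝ determined by μ([j + i·3^{−n}, j + (i+1)·3^{−n})) = δ^{n−k(i)}(1−2δ)^{k(i)} for all integers j, n ≥ 0 and 0 ≤ i < 3^n, where k(i) is the number of digits equal to 1 among the first n ternary digits of i. If I and J are two triadic intervals of the same generation n (i.e. of the same length 3^{−n}) that are adjacent, then μ(I) ≤ ((1−2δ)/δ)·μ(J). -/
open MeasureTheory Set

noncomputable section

lemma ternaryOnes_pos (m : ℕ) (hm : 0 < m) :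
    ternaryOnes m = (if m % 3 = 1 then 1 else 0) + ternaryOnes (m / 3) := by
  unfold ternaryOnes
  rw [Nat.digits_def' (by norm_num) hm, List.count_cons]
  have h3 : m % 3 = 0 ∨ m % 3 = 1 ∨ m % 3 = 2 := by omega
  rcases h3 with h | h | h <;> simp [h, Nat.add_comm]

lemma ternaryOnes_succ (m : ℕ) :
    ternaryOnes (m + 1) ≤ ternaryOnes m + 1 ∧ ternaryOnes m ≤ ternaryOnes (m + 1) + 1 := by
  induction m using Nat.strong_induction_on with
  | _ m ih =>
    have h3 : m % 3 = 0 ∨ m % 3 = 1 ∨ m % 3 = 2 := by omega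
    rcases h3 with h | h | h
    · rcases Nat.eq_zero_or_pos m with rfl | hm
      · simp [ternaryOnes]
      · have h1 : ternaryOnes (m+1) = 1 + ternaryOnes ((m+1)/3) := by
          rw [ternaryOnes_pos _ (by omega)]; simp [Nat.add_mod, h]
        have h0 : ternaryOnes m = ternaryOnes (m/3) := by
          rw [ternaryOnes_pos _ hm]; simp [h]
        have hq : (m+1)/3 = m/3 := by omega
        rw [hq] at h1
        omega
    · have h1 : ternaryOnes (m+1) = ternaryOnes ((m+1)/3) := by
        rw [ternaryOnes_pos _ (by omega)]; simp [Nat.add_mod, h]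
      have h0 : ternaryOnes m = 1 + ternaryOnes (m/3) := by
        rw [ternaryOnes_pos _ (by omega)]; simp [h]
      have hq : (m+1)/3 = m/3 := by omega
      rw [hq] at h1
      omega
    · have h0 : ternaryOnes m = ternaryOnes (m/3) := by
        rw [ternaryOnes_pos _ (by omega)]; simp [h]
      have h1 : ternaryOnes (m+1) = ternaryOnes ((m+1)/3) := by
        rw [ternaryOnes_pos _ (by omega)]; simp [Nat.add_mod, h]
      have hq : (m+1)/3 = m/3 + 1 := by omega
      rw [hq] at h1
      have := ih (m/3) (by omega)
      omega

lemma ternaryOnes_pred_pow (n : ℕ) : ternaryOnes (3 ^ n - 1) = 0 := by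
  induction n with
  | zero => simp [ternaryOnes]
  | succ n ih =>
    have h3 : 1 ≤ 3 ^ n := Nat.one_le_pow _ _ (by norm_num)
    have hsplit : 3 ^ (n+1) - 1 = 3 * (3 ^ n - 1) + 2 := by rw [pow_succ]; omega
    have hpos : 0 < 3 ^ (n+1) - 1 := by omega
    have hmod : (3 ^ (n+1) - 1) % 3 = 2 := by omega
    have hdiv : (3 ^ (n+1) - 1) / 3 = 3 ^ n - 1 := by omega
    rw [ternaryOnes_pos _ hpos, hmod, hdiv]; simpa using ih

lemma ternaryOnes_le {m n : ℕ} (h : m < 3 ^ n) : ternaryOnes m ≤ n := by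
  rcases Nat.eq_zero_or_pos m with rfl | hm
  · simp [ternaryOnes]
  calc ternaryOnes m ≤ (Nat.digits 3 m).length := List.count_le_length
    _ ≤ n := by
        rw [Nat.digits_len 3 m (by norm_num) (by omega)]
        have := Nat.log_lt_of_lt_pow (by omega) h
        omega

/-- The triadic interval `[i·3⁻ⁿ, (i+1)·3⁻ⁿ)` of generation `n`, `i ∈ ℤ`. -/
def triIcoZ (n : ℕ) (i : ℤ) : Set ℝ := Set.Ico ((i : ℝ) / 3 ^ n) (((i : ℝ) + 1) / 3 ^ n)


/-- For two adjacent triadic intervals `I`, `J` of the same generation (i.e. with indices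
differing by one), `μ(I) ≤ ((1-2δ)/δ) · μ(J)`. -/
theorem ternary_measure_adjacent_ratio (δ : ℝ) (hδ0 : 0 < δ) (hδ : δ ≤ 1 / 3)
    (μ : Measure ℝ) (hμ : ternarySpec δ μ) (n : ℕ) (i i' : ℤ)
    (hadj : i' = i + 1 ∨ i = i' + 1) :
    μ (triIcoZ n i) ≤ ENNReal.ofReal ((1 - 2 * δ) / δ) * μ (triIcoZ n i') := by
  set N : ℤ := (3:ℤ) ^ n with hNdef
  have hN : (0:ℤ) < N := by positivity
  have hNcast : ((3 ^ n : ℕ) : ℤ) = N := by push_cast [hNdef]; ring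
  have hnat : ∀ a : ℤ, ((a % N).toNat) < 3 ^ n := by
    intro a
    have hr0 : (0:ℤ) ≤ a % N := Int.emod_nonneg a (by positivity)
    have hlt : a % N < N := Int.emod_lt_of_pos a hN
    omega
  have hmeas : ∀ a : ℤ, μ (triIcoZ n a) =
      ENNReal.ofReal (δ ^ (n - ternaryOnes (a % N).toNat) *
        (1 - 2 * δ) ^ ternaryOnes (a % N).toNat) := by
    intro a
    set r : ℕ := (a % N).toNat with hr
    have hr0 : (0:ℤ) ≤ a % N := Int.emod_nonneg a (by positivity)
    have key := hμ (a / N) n r (hnat a)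
    have ha : (a : ℝ) = ((a / N : ℤ) : ℝ) * 3 ^ n + (r : ℝ) := by
      have h2 : N * (a / N) + a % N = a := Int.mul_ediv_add_emod a N
      have h3 : (r : ℤ) = a % N := Int.toNat_of_nonneg hr0
      have h4 : a = N * (a / N) + (r : ℤ) := by rw [h3]; linarith
      have h5 := congrArg (fun z : ℤ => (z : ℝ)) h4
      push_cast [hNdef] at h5 ⊢
      linarith
    have heq : triIcoZ n a = Set.Ico (((a / N : ℤ) : ℝ) + (r : ℝ) / 3 ^ n)
        (((a / N : ℤ) : ℝ) + ((r : ℝ) + 1) / 3 ^ n) := by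
      have h3 : (0:ℝ) < (3:ℝ) ^ n := by positivity
      unfold triIcoZ
      congr 1 <;> rw [ha] <;> field_simp <;> ring
    rw [heq, key]
  rw [hmeas i, hmeas i']
  -- combinatorial fact for adjacent indices
  have hadjk : ∀ a : ℤ,
      ternaryOnes ((a % N).toNat) ≤ ternaryOnes (((a+1) % N).toNat) + 1 ∧
      ternaryOnes (((a+1) % N).toNat) ≤ ternaryOnes ((a % N).toNat) + 1 := by
    intro a
    have hr0 : (0:ℤ) ≤ a % N := Int.emod_nonneg a (by positivity)
    have hlt : a % N < N := Int.emod_lt_of_pos a hN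
    by_cases hlast : a % N = N - 1
    · have hdvd : N ∣ a + 1 := by
        have h1 : N ∣ a - (N - 1) := Int.dvd_self_sub_of_emod_eq hlast
        have h2 : a + 1 = (a - (N - 1)) + N := by ring
        rw [h2]; exact dvd_add h1 dvd_rfl
      have h1 : (a + 1) % N = 0 := Int.emod_eq_zero_of_dvd hdvd
      have hnat1 : ((a % N).toNat) = 3 ^ n - 1 := by omega
      rw [h1, hnat1, ternaryOnes_pred_pow]
      simp [ternaryOnes]
    · have h1 : (a + 1) % N = a % N + 1 := by
        have hlt2 : a % N < N - 1 := lt_of_le_of_ne (by omega) hlast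
        conv_lhs => rw [Int.add_emod]
        have h1m : (1:ℤ) % N = 1 := Int.emod_eq_of_lt (by norm_num) (by omega)
        rw [h1m]
        exact Int.emod_eq_of_lt (by omega) (by omega)
      have h2 : ((a+1) % N).toNat = (a % N).toNat + 1 := by omega
      rw [h2]
      exact ⟨(ternaryOnes_succ _).2, (ternaryOnes_succ _).1⟩
  set k := ternaryOnes ((i % N).toNat) with hkdef
  set k' := ternaryOnes ((i' % N).toNat) with hk'def
  have hk : k ≤ k' + 1 := by
    rcases hadj with h | h
    · have := (hadjk i).1; rw [← h] at this; exact this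
    · have := (hadjk i').2; rw [← h] at this; exact this
  have hkn : k ≤ n := ternaryOnes_le (hnat i)
  have hkn' : k' ≤ n := ternaryOnes_le (hnat i')
  have hδ1 : (0:ℝ) < 1 - 2*δ := by linarith
  have hrat1 : (1:ℝ) ≤ (1 - 2*δ)/δ := by rw [le_div_iff₀ hδ0]; linarith
  have hform : ∀ m, m ≤ n → δ ^ (n - m) * (1 - 2*δ) ^ m = δ ^ n * ((1 - 2*δ)/δ) ^ m := by
    intro m hm
    rw [div_pow, pow_sub₀ δ (ne_of_gt hδ0) hm]
    field_simp
  have hreal : δ ^ (n - k) * (1 - 2*δ) ^ k ≤ ((1 - 2*δ)/δ) * (δ ^ (n - k') * (1 - 2*δ) ^ k') := by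
    rw [hform k hkn, hform k' hkn']
    have hmono : ((1 - 2*δ)/δ) ^ k ≤ ((1 - 2*δ)/δ) ^ (k' + 1) := pow_le_pow_right₀ hrat1 hk
    calc δ ^ n * ((1 - 2*δ)/δ) ^ k ≤ δ ^ n * ((1 - 2*δ)/δ) ^ (k'+1) :=
          mul_le_mul_of_nonneg_left hmono (by positivity)
      _ = (1 - 2*δ)/δ * (δ ^ n * ((1 - 2*δ)/δ) ^ k') := by ring
  calc ENNReal.ofReal (δ ^ (n - k) * (1 - 2*δ) ^ k)
      ≤ ENNReal.ofReal (((1 - 2*δ)/δ) * (δ ^ (n - k') * (1 - 2*δ) ^ k')) :=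
        ENNReal.ofReal_le_ofReal hreal
    _ = ENNReal.ofReal ((1 - 2*δ)/δ) * ENNReal.ofReal (δ ^ (n - k') * (1 - 2*δ) ^ k') :=
        ENNReal.ofReal_mul (by positivity)
end
end

section
/- Let n ≥ 1 be an integer and let 0 < p ≤ a < 1. Then Σ_{m : an ≤ m ≤ n} C(n,m) p^m (1−p)^{n−m} ≤ e^{−n·H(a,p)}, where H(a,p) = a·log(a/p) + (1−a)·log((1−a)/(1−p)) and C(n,m) is the binomial coefficient. -/
open Finset

/-- Cramér's bound for the binomial tail: for `0 < p ≤ a < 1` and `n ≥ 1`,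
`Σ_{m : an ≤ m ≤ n} C(n,m) pᵐ (1-p)^{n-m} ≤ exp(-n·H(a,p))`
with `H(a,p) = a log(a/p) + (1-a) log((1-a)/(1-p))`. -/
theorem binomial_tail_bound (n : ℕ) (hn : 1 ≤ n) (a p : ℝ)
    (hp : 0 < p) (hpa : p ≤ a) (ha : a < 1) :
    ∑ m ∈ (Finset.range (n + 1)).filter (fun m : ℕ => a * n ≤ (m : ℝ)),
        (n.choose m : ℝ) * p ^ m * (1 - p) ^ (n - m) ≤
      Real.exp (-(n : ℝ) *
        (a * Real.log (a / p) + (1 - a) * Real.log ((1 - a) / (1 - p)))) := by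
  have h1p : 0 < 1 - p := by linarith
  have h1a : 0 < 1 - a := by linarith
  have ha0 : 0 < a := lt_of_lt_of_le hp hpa
  set t : ℝ := Real.log (a * (1 - p) / (p * (1 - a))) with ht
  have ht0 : 0 ≤ t := Real.log_nonneg (by
    rw [le_div_iff₀ (by positivity)]
    nlinarith)
  have hrpos : 0 < a * (1 - p) / (p * (1 - a)) := by positivity
  have hexp : Real.exp t = a * (1 - p) / (p * (1 - a)) := Real.exp_log hrpos
  have key : ∀ m ∈ (Finset.range (n+1)).filter (fun m : ℕ => a * n ≤ (m:ℝ)),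
      (n.choose m : ℝ) * p ^ m * (1 - p) ^ (n - m)
        ≤ Real.exp (-(t * (a * n))) *
          ((p * Real.exp t) ^ m * (1 - p) ^ (n - m) * (n.choose m : ℝ)) := by
    intro m hm
    simp only [mem_filter, mem_range] at hm
    have h1 : (1:ℝ) ≤ Real.exp (-(t * (a * n))) * Real.exp t ^ m := by
      rw [← Real.exp_nat_mul, ← Real.exp_add]
      have h2 : (0:ℝ) ≤ -(t * (a * n)) + m * t := by nlinarith [hm.2]
      calc (1:ℝ) = Real.exp 0 := (Real.exp_zero).symm
        _ ≤ _ := Real.exp_le_exp.mpr h2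
    have hterm : 0 ≤ (n.choose m : ℝ) * p ^ m * (1 - p) ^ (n - m) := by positivity
    calc (n.choose m : ℝ) * p ^ m * (1 - p) ^ (n - m)
        = 1 * ((n.choose m : ℝ) * p ^ m * (1 - p) ^ (n - m)) := by ring
      _ ≤ (Real.exp (-(t * (a * n))) * Real.exp t ^ m) *
            ((n.choose m : ℝ) * p ^ m * (1 - p) ^ (n - m)) :=
          mul_le_mul_of_nonneg_right h1 hterm
      _ = Real.exp (-(t * (a * n))) *
            ((p * Real.exp t) ^ m * (1 - p) ^ (n - m) * (n.choose m : ℝ)) := by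
          rw [mul_pow]; ring
  have step1 := Finset.sum_le_sum key
  have step2 : ∑ m ∈ (Finset.range (n+1)).filter (fun m : ℕ => a * n ≤ (m:ℝ)),
      Real.exp (-(t * (a * n))) *
        ((p * Real.exp t) ^ m * (1 - p) ^ (n - m) * (n.choose m : ℝ))
      ≤ ∑ m ∈ Finset.range (n+1),
      Real.exp (-(t * (a * n))) *
        ((p * Real.exp t) ^ m * (1 - p) ^ (n - m) * (n.choose m : ℝ)) := by
    apply Finset.sum_le_sum_of_subset_of_nonneg (Finset.filter_subset _ _)
    intro m _ _
    have hept : 0 < Real.exp t := Real.exp_pos t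
    positivity
  have step3 : ∑ m ∈ Finset.range (n+1),
      Real.exp (-(t * (a * n))) *
        ((p * Real.exp t) ^ m * (1 - p) ^ (n - m) * (n.choose m : ℝ))
      = Real.exp (-(t * (a * n))) * (p * Real.exp t + (1 - p)) ^ n := by
    rw [← Finset.mul_sum, add_pow]
  have hsum : p * Real.exp t + (1 - p) = (1 - p) / (1 - a) := by
    rw [hexp]
    field_simp
    ring
  have hfinal : Real.exp (-(t * (a * n))) * (p * Real.exp t + (1 - p)) ^ n
      = Real.exp (-(n : ℝ) *
        (a * Real.log (a / p) + (1 - a) * Real.log ((1 - a) / (1 - p)))) := by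
    rw [hsum]
    have hq : (0:ℝ) < (1 - p) / (1 - a) := by positivity
    rw [show ((1 - p) / (1 - a)) ^ n = Real.exp ((n : ℝ) * Real.log ((1 - p) / (1 - a))) by
      rw [Real.exp_nat_mul, Real.exp_log hq], ← Real.exp_add]
    congr 1
    rw [ht, Real.log_div (by positivity) (by positivity),
      Real.log_div (ne_of_gt h1p) (ne_of_gt h1a),
      Real.log_div (ne_of_gt ha0) (ne_of_gt hp),
      Real.log_div (ne_of_gt h1a) (ne_of_gt h1p),
      Real.log_mul (ne_of_gt ha0) (ne_of_gt h1p),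
      Real.log_mul (ne_of_gt hp) (ne_of_gt h1a)]
    ring
  calc _ ≤ _ := step1
    _ ≤ _ := step2
    _ = _ := step3.trans hfinal
end

section
/- For all real numbers a, p with 0 < p ≤ a < 1, one has H(a,p) ≥ log(1/p) − (1−a)·[log((1−p)/p) + 1 + log(1/(1−a))], where H(a,p) = a·log(a/p) + (1−a)·log((1−a)/(1−p)). -/
/-- For `0 < p ≤ a < 1`, the relative entropy
`H(a,p) = a log(a/p) + (1-a) log((1-a)/(1-p))` satisfies
`H(a,p) ≥ log(1/p) - (1-a)·[log((1-p)/p) + 1 + log(1/(1-a))]`. -/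
theorem entropy_lower_bound (a p : ℝ) (hp : 0 < p) (hpa : p ≤ a) (ha : a < 1) :
    Real.log (1 / p) - (1 - a) * (Real.log ((1 - p) / p) + 1 + Real.log (1 / (1 - a))) ≤
      a * Real.log (a / p) + (1 - a) * Real.log ((1 - a) / (1 - p)) := by
  have h0a : 0 < a := lt_of_lt_of_le hp hpa
  have h1a : 0 < 1 - a := by linarith
  have h1p : 0 < 1 - p := by linarith
  have hinv : Real.log (1 / a) ≤ 1 / a - 1 :=
    Real.log_le_sub_one_of_pos (one_div_pos.mpr h0a)
  rw [one_div, Real.log_inv] at hinv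
  have key : a - 1 ≤ a * Real.log a := by
    have := mul_le_mul_of_nonneg_left hinv h0a.le
    have h : a * (a⁻¹ - 1) = 1 - a := by field_simp
    have h2 : a * -Real.log a = -(a * Real.log a) := by ring
    linarith
  rw [Real.log_div h0a.ne' hp.ne', Real.log_div h1a.ne' h1p.ne',
    Real.log_div h1p.ne' hp.ne', one_div, one_div, Real.log_inv, Real.log_inv]
  nlinarith [key]
end

section
/- Fix δ ∈ (0,1/3], let μ be the Borel measure on ℝ determined by μ([j + i·3^{−n}, j + (i+1)·3^{−n})) = δ^{n−k(i)}(1−2δ)^{k(i)} for all integers j, n ≥ 0 and 0 ≤ i < 3^n (where k(i) is the number of digits equal to 1 among the first n ternary digits of i), and for integers 0 ≤ k ≤ n let K(n,k) be the union of those triadic intervals I ⊆ [0,1) of length 3^{−n} with μ(I) ≥ δ^k (1−2δ)^{n−k}. If 2δn ≤ k ≤ (2/3)n, then 1 − μ(K(n,k)) ≤ exp(−2n·(k/n − 2δ)^2). -/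
open MeasureTheory Set

noncomputable section

/-- The triadic interval `[i·3⁻ⁿ, (i+1)·3⁻ⁿ) ⊆ [0,1)` of generation `n`, `0 ≤ i < 3 ^ n`. -/
def triIco (n i : ℕ) : Set ℝ := Set.Ico ((i : ℝ) / 3 ^ n) (((i : ℝ) + 1) / 3 ^ n)

/-- Indices `0 ≤ i < 3 ^ n` of the "heavy" triadic intervals of generation `n` inside `[0,1)`,
those with `μ(I) ≥ δ ^ k · (1 - 2δ) ^ (n - k)`. -/
def goodIdx (δ : ℝ) (μ : Measure ℝ) (n k : ℕ) : Set ℕ :=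
  {i | i < 3 ^ n ∧ ENNReal.ofReal (δ ^ k * (1 - 2 * δ) ^ (n - k)) ≤ μ (triIco n i)}

/-- `K(n,k)`: the union of the triadic intervals `I ⊆ [0,1)` of generation `n` with
`μ(I) ≥ δ ^ k · (1 - 2δ) ^ (n - k)`. -/
def Kset (δ : ℝ) (μ : Measure ℝ) (n k : ℕ) : Set ℝ := ⋃ i ∈ goodIdx δ μ n k, triIco n i

section Aux


lemma ternaryOnes_le_s8 {n i : ℕ} (hi : i < 3 ^ n) : ternaryOnes i ≤ n := by
  rcases eq_or_ne i 0 with rfl | h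
  · simp [ternaryOnes]
  · calc (Nat.digits 3 i).count 1 ≤ (Nat.digits 3 i).length := List.count_le_length
    _ = Nat.log 3 i + 1 := Nat.digits_len 3 i (by norm_num) h
    _ ≤ n := Nat.log_lt_of_lt_pow h hi

lemma ternaryOnes_step (q d : ℕ) (hd : d < 3) :
    ternaryOnes (3 * q + d) = (if d = 1 then 1 else 0) + ternaryOnes q := by
  rcases eq_or_ne (3 * q + d) 0 with h0 | h0
  · have hq : q = 0 := by omega
    have hd0 : d = 0 := by omega
    simp [hq, hd0, ternaryOnes]
  · unfold ternaryOnes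
    rw [Nat.digits_def' (by norm_num : 1 < 3) (Nat.pos_of_ne_zero h0)]
    have h1 : (3 * q + d) % 3 = d := by omega
    have h2 : (3 * q + d) / 3 = q := by omega
    rw [h1, h2, List.count_cons]
    by_cases h : d = 1 <;> simp [h] <;> omega

lemma sum_range_three_mul {M : Type*} [AddCommMonoid M] (m : ℕ) (f : ℕ → M) :
    ∑ i ∈ Finset.range (3 * m), f i
      = ∑ q ∈ Finset.range m, (f (3 * q) + f (3 * q + 1) + f (3 * q + 2)) := by
  induction m with
  | zero => simp
  | succ m ih =>
      have h3 : 3 * (m + 1) = (3 * m + 2) + 1 := by ring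
      rw [h3, Finset.sum_range_succ, Finset.sum_range_succ, Finset.sum_range_succ, ih,
        Finset.sum_range_succ]
      abel

lemma sum_c_pow (c : ℝ) (n : ℕ) :
    ∑ i ∈ Finset.range (3 ^ n), c ^ ternaryOnes i = (2 + c) ^ n := by
  induction n with
  | zero => simp [ternaryOnes]
  | succ n ih =>
      have h3 : (3:ℕ) ^ (n + 1) = 3 * 3 ^ n := by ring
      rw [h3, sum_range_three_mul]
      have e : ∀ q, c ^ ternaryOnes (3 * q) + c ^ ternaryOnes (3 * q + 1)
          + c ^ ternaryOnes (3 * q + 2) = (2 + c) * c ^ ternaryOnes q := by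
        intro q
        have e0 : ternaryOnes (3 * q) = ternaryOnes q := by
          simpa using ternaryOnes_step q 0 (by norm_num)
        rw [e0, ternaryOnes_step q 1 (by norm_num), ternaryOnes_step q 2 (by norm_num)]
        simp [pow_add]
        ring
      rw [Finset.sum_congr rfl (fun q _ => e q), ← Finset.mul_sum, ih, pow_succ]
      ring

lemma sum_weight (a b : ℝ) (ha : 0 < a) (n : ℕ) :
    ∑ i ∈ Finset.range (3 ^ n), a ^ (n - ternaryOnes i) * b ^ ternaryOnes i
      = (2 * a + b) ^ n := by
  have h : ∀ i ∈ Finset.range (3 ^ n), a ^ (n - ternaryOnes i) * b ^ ternaryOnes i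
      = a ^ n * (b / a) ^ ternaryOnes i := by
    intro i hi
    have hk := ternaryOnes_le_s8 (Finset.mem_range.mp hi)
    rw [pow_sub₀ a ha.ne' hk, div_pow]
    field_simp
  rw [Finset.sum_congr rfl h, ← Finset.mul_sum, sum_c_pow, ← mul_pow]
  congr 1
  field_simp

lemma bernoulli_mgf_bound (p : ℝ) (hp0 : 0 ≤ p) (hp1 : p ≤ 1) {t : ℝ} (ht : 0 ≤ t) :
    1 - p + p * Real.exp t ≤ Real.exp (p * t + t ^ 2 / 8) := by
  set D : ℝ → ℝ := fun s => 1 - p + p * Real.exp s with hDdef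
  have hDpos : ∀ s, 0 < D s := by
    intro s
    rcases eq_or_lt_of_le hp0 with h | h
    · simp [hDdef, ← h]
    · have h1 : 0 < p * Real.exp s := mul_pos h (Real.exp_pos s)
      have : (0:ℝ) ≤ 1 - p := by linarith
      simp only [hDdef]; linarith
  have hD' : ∀ s, HasDerivAt D (p * Real.exp s) s := fun s =>
    ((Real.hasDerivAt_exp s).const_mul p).const_add (1 - p)
  set φ : ℝ → ℝ := fun s => p + s / 4 - p * Real.exp s / D s with hφdef
  have hφ' : ∀ s, HasDerivAt φ
      (1 / 4 - (p * Real.exp s * D s - p * Real.exp s * (p * Real.exp s)) / (D s) ^ 2) s := by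
    intro s
    have h1 : HasDerivAt (fun x : ℝ => p + x / 4) (1 / 4) s := by
      simpa using ((hasDerivAt_id s).div_const 4).const_add p
    have h2 : HasDerivAt (fun x => p * Real.exp x / D x)
        ((p * Real.exp s * D s - p * Real.exp s * (p * Real.exp s)) / (D s) ^ 2) s :=
      ((Real.hasDerivAt_exp s).const_mul p).div (hD' s) (hDpos s).ne'
    exact h1.sub h2
  have hφ'nonneg : ∀ s,
      0 ≤ 1 / 4 - (p * Real.exp s * D s - p * Real.exp s * (p * Real.exp s)) / (D s) ^ 2 := by
    intro s
    rw [sub_nonneg, div_le_iff₀ (pow_pos (hDpos s) 2)]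
    nlinarith [sq_nonneg (D s / 2 - p * Real.exp s)]
  have hφ0 : φ 0 = 0 := by
    simp only [hφdef, hDdef, Real.exp_zero, mul_one]
    have : 1 - p + p = 1 := by ring
    rw [this]; ring
  have hφmono : MonotoneOn φ (Set.Ici (0:ℝ)) := by
    apply monotoneOn_of_deriv_nonneg (convex_Ici 0)
    · exact fun s _ => (hφ' s).continuousAt.continuousWithinAt
    · exact fun s _ => ((hφ' s).differentiableAt).differentiableWithinAt
    · intro s _
      rw [(hφ' s).deriv]
      exact hφ'nonneg s
  have hφnonneg : ∀ s ∈ Set.Ici (0:ℝ), 0 ≤ φ s := by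
    intro s hs
    calc (0:ℝ) = φ 0 := hφ0.symm
    _ ≤ φ s := hφmono (Set.self_mem_Ici) hs hs
  set f : ℝ → ℝ := fun s => p * s + s ^ 2 / 8 - Real.log (D s) with hfdef
  have hf' : ∀ s, HasDerivAt f (φ s) s := by
    intro s
    have h1 : HasDerivAt (fun x : ℝ => p * x + x ^ 2 / 8) (p + s / 4) s := by
      have ha : HasDerivAt (fun x : ℝ => p * x) p s := by
        simpa using (hasDerivAt_id s).const_mul p
      have hb : HasDerivAt (fun x : ℝ => x ^ 2 / 8) (s / 4) s := by
        have := (hasDerivAt_pow 2 s).div_const 8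
        refine this.congr_deriv ?_
        ring
      exact ha.add hb
    have h2 : HasDerivAt (fun x => Real.log (D x)) (p * Real.exp s / D s) s := by
      exact (hD' s).log (hDpos s).ne'
    exact h1.sub h2
  have hfmono : MonotoneOn f (Set.Ici (0:ℝ)) := by
    apply monotoneOn_of_deriv_nonneg (convex_Ici 0)
    · exact fun s _ => (hf' s).continuousAt.continuousWithinAt
    · exact fun s _ => ((hf' s).differentiableAt).differentiableWithinAt
    · intro s hs
      rw [(hf' s).deriv]
      exact hφnonneg s (le_of_lt (by simpa using hs))
  have hf0 : f 0 = 0 := by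
    simp only [hfdef, hDdef, Real.exp_zero, mul_one, mul_zero]
    have : 1 - p + p = 1 := by ring
    rw [this]
    simp
  have hft : 0 ≤ f t := by
    calc (0:ℝ) = f 0 := hf0.symm
    _ ≤ f t := hfmono Set.self_mem_Ici ht ht
  have hlog : Real.log (D t) ≤ p * t + t ^ 2 / 8 := by
    simp only [hfdef] at hft; linarith
  calc D t = Real.exp (Real.log (D t)) := (Real.exp_log (hDpos t)).symm
  _ ≤ Real.exp (p * t + t ^ 2 / 8) := Real.exp_le_exp.mpr hlog

lemma tail_bound (δ : ℝ) (hδ0 : 0 < δ) (hδ : δ ≤ 1 / 3) (n k : ℕ)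
    (hk1 : 2 * δ * n ≤ (k : ℝ)) (hk2 : (k : ℝ) ≤ 2 / 3 * n) :
    ∑ i ∈ (Finset.range (3 ^ n)).filter (fun i => k + 1 ≤ n - ternaryOnes i),
        δ ^ (n - ternaryOnes i) * (1 - 2 * δ) ^ ternaryOnes i
      ≤ Real.exp (-2 * n * ((k : ℝ) / n - 2 * δ) ^ 2) := by
  have hb0 : (0:ℝ) ≤ 1 - 2 * δ := by linarith
  rcases Nat.eq_zero_or_pos n with rfl | hn
  · have hempty : (Finset.range (3 ^ 0)).filter (fun i => k + 1 ≤ 0 - ternaryOnes i) = ∅ := by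
      apply Finset.filter_eq_empty_iff.mpr
      intro i _
      omega
    rw [hempty, Finset.sum_empty]
    positivity
  · set p : ℝ := 2 * δ with hp
    set t : ℝ := 4 * ((k : ℝ) / n - p) with htdef
    have hN : (0:ℝ) < n := by exact_mod_cast hn
    have ht : 0 ≤ t := by
      rw [htdef]
      have : p ≤ (k : ℝ) / n := by
        rw [le_div_iff₀ hN]
        linarith [hk1]
      linarith
    -- step 1 : pointwise bound
    have step1 : ∀ i ∈ (Finset.range (3 ^ n)).filter (fun i => k + 1 ≤ n - ternaryOnes i),
        δ ^ (n - ternaryOnes i) * (1 - 2 * δ) ^ ternaryOnes i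
          ≤ Real.exp (-(t * k)) * ((δ * Real.exp t) ^ (n - ternaryOnes i)
              * (1 - 2 * δ) ^ ternaryOnes i) := by
      intro i hi
      obtain ⟨hir, hik⟩ := Finset.mem_filter.mp hi
      set j := n - ternaryOnes i with hj
      have hjk : (k : ℝ) ≤ (j : ℝ) := by exact_mod_cast (by omega : k ≤ j)
      have h1 : (1:ℝ) ≤ Real.exp (-(t * k)) * Real.exp t ^ j := by
        rw [← Real.exp_nat_mul, ← Real.exp_add]
        rw [show (1:ℝ) = Real.exp 0 from (Real.exp_zero).symm]
        apply Real.exp_le_exp.mpr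
        have : 0 ≤ t * ((j:ℝ) - k) := mul_nonneg ht (by linarith)
        nlinarith
      have hterm : 0 ≤ δ ^ j * (1 - 2 * δ) ^ ternaryOnes i := by positivity
      calc δ ^ j * (1 - 2 * δ) ^ ternaryOnes i
          = 1 * (δ ^ j * (1 - 2 * δ) ^ ternaryOnes i) := by ring
        _ ≤ (Real.exp (-(t * k)) * Real.exp t ^ j) * (δ ^ j * (1 - 2 * δ) ^ ternaryOnes i) :=
            mul_le_mul_of_nonneg_right h1 hterm
        _ = Real.exp (-(t * k)) * ((δ * Real.exp t) ^ j * (1 - 2 * δ) ^ ternaryOnes i) := by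
            rw [mul_pow]; ring
    -- step 2 : extend sum to full range
    have step2 : ∑ i ∈ (Finset.range (3 ^ n)).filter (fun i => k + 1 ≤ n - ternaryOnes i),
        δ ^ (n - ternaryOnes i) * (1 - 2 * δ) ^ ternaryOnes i
        ≤ Real.exp (-(t * k)) * (2 * (δ * Real.exp t) + (1 - 2 * δ)) ^ n := by
      calc ∑ i ∈ (Finset.range (3 ^ n)).filter (fun i => k + 1 ≤ n - ternaryOnes i),
          δ ^ (n - ternaryOnes i) * (1 - 2 * δ) ^ ternaryOnes i
          ≤ ∑ i ∈ (Finset.range (3 ^ n)).filter (fun i => k + 1 ≤ n - ternaryOnes i),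
            Real.exp (-(t * k)) * ((δ * Real.exp t) ^ (n - ternaryOnes i)
              * (1 - 2 * δ) ^ ternaryOnes i) := Finset.sum_le_sum step1
        _ ≤ ∑ i ∈ Finset.range (3 ^ n),
            Real.exp (-(t * k)) * ((δ * Real.exp t) ^ (n - ternaryOnes i)
              * (1 - 2 * δ) ^ ternaryOnes i) := by
            apply Finset.sum_le_sum_of_subset_of_nonneg (Finset.filter_subset _ _)
            intro i _ _
            positivity
        _ = Real.exp (-(t * k)) * (2 * (δ * Real.exp t) + (1 - 2 * δ)) ^ n := by
            rw [← Finset.mul_sum, sum_weight _ _ (by positivity)]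
    -- step 3 : Hoeffding
    have step3 : (2 * (δ * Real.exp t) + (1 - 2 * δ)) ^ n
        ≤ Real.exp (n * (p * t + t ^ 2 / 8)) := by
      have hH : 2 * (δ * Real.exp t) + (1 - 2 * δ) ≤ Real.exp (p * t + t ^ 2 / 8) := by
        have := bernoulli_mgf_bound p (by linarith) (by linarith) ht
        rw [hp] at this ⊢
        linarith
      calc (2 * (δ * Real.exp t) + (1 - 2 * δ)) ^ n
          ≤ Real.exp (p * t + t ^ 2 / 8) ^ n := by
            apply pow_le_pow_left₀ (by nlinarith [Real.exp_pos t]) hH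
        _ = Real.exp (n * (p * t + t ^ 2 / 8)) := (Real.exp_nat_mul _ n).symm
    -- final arithmetic
    have hfinal : Real.exp (-(t * k)) * Real.exp ((n:ℝ) * (p * t + t ^ 2 / 8))
        = Real.exp (-2 * n * ((k : ℝ) / n - 2 * δ) ^ 2) := by
      rw [← Real.exp_add]
      congr 1
      have hkN : (k : ℝ) = n * ((k:ℝ) / n) := by field_simp
      rw [htdef, hp]
      field_simp
      ring
    calc ∑ i ∈ (Finset.range (3 ^ n)).filter (fun i => k + 1 ≤ n - ternaryOnes i),
        δ ^ (n - ternaryOnes i) * (1 - 2 * δ) ^ ternaryOnes i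
        ≤ Real.exp (-(t * k)) * (2 * (δ * Real.exp t) + (1 - 2 * δ)) ^ n := step2
      _ ≤ Real.exp (-(t * k)) * Real.exp ((n:ℝ) * (p * t + t ^ 2 / 8)) := by
          apply mul_le_mul_of_nonneg_left step3 (Real.exp_pos _).le
      _ = Real.exp (-2 * n * ((k : ℝ) / n - 2 * δ) ^ 2) := hfinal

lemma triIco_disjoint (n : ℕ) {i j : ℕ} (h : i ≠ j) : Disjoint (triIco n i) (triIco n j) := by
  have key : ∀ {a b : ℕ}, a < b → Disjoint (triIco n a) (triIco n b) := by
    intro a b hab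
    unfold triIco
    rw [Set.Ico_disjoint_Ico]
    have h3 : (0:ℝ) < 3 ^ n := by positivity
    have hab' : (a:ℝ) + 1 ≤ (b:ℝ) := by exact_mod_cast hab
    have hmid : ((a:ℝ) + 1) / 3 ^ n ≤ (b:ℝ) / 3 ^ n := by gcongr
    exact le_trans (min_le_left _ _) (hmid.trans (le_max_right _ _))
  rcases h.lt_or_gt with h | h
  · exact key h
  · exact (key h).symm


end Aux

/-- If `2δn ≤ k ≤ (2/3)n` then `1 - μ(K(n,k)) ≤ exp(-2n(k/n - 2δ)²)`. -/
theorem measure_Kset_lower_bound (δ : ℝ) (hδ0 : 0 < δ) (hδ : δ ≤ 1 / 3)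
    (μ : Measure ℝ) (hμ : ternarySpec δ μ) (n k : ℕ)
    (hk1 : 2 * δ * n ≤ (k : ℝ)) (hk2 : (k : ℝ) ≤ 2 / 3 * n) :
    1 - μ (Kset δ μ n k) ≤
      ENNReal.ofReal (Real.exp (-2 * n * ((k : ℝ) / n - 2 * δ) ^ 2)) := by
  classical
  have hb0 : (0:ℝ) ≤ 1 - 2 * δ := by linarith
  have hδb : δ ≤ 1 - 2 * δ := by linarith
  have hkn : k ≤ n := by
    have h1 : (k : ℝ) ≤ (n : ℝ) := by
      have : (0:ℝ) ≤ (n:ℝ) := Nat.cast_nonneg n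
      linarith
    exact_mod_cast h1
  have hmass : ∀ i, i < 3 ^ n →
      μ (triIco n i) = ENNReal.ofReal (δ ^ (n - ternaryOnes i) * (1 - 2 * δ) ^ ternaryOnes i) := by
    intro i hi
    have := hμ 0 n i hi
    simpa [triIco] using this
  have hgood : ∀ i, i < 3 ^ n → n - ternaryOnes i ≤ k → i ∈ goodIdx δ μ n k := by
    intro i hi hle
    refine ⟨hi, ?_⟩
    rw [hmass i hi]
    apply ENNReal.ofReal_le_ofReal
    set j := n - ternaryOnes i with hj
    have hjn : ternaryOnes i ≤ n := ternaryOnes_le_s8 hi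
    have e1 : k = j + (k - j) := by omega
    have e2 : n - j = (k - j) + (n - k) := by omega
    have e3 : ternaryOnes i = n - j := by omega
    rw [e3]
    have ejk : j + (k - j) = k := by omega
    have enk : (k - j) + (n - k) = n - j := by omega
    have ek : δ ^ k = δ ^ j * δ ^ (k - j) := by rw [← pow_add, ejk]
    have eb : (1 - 2 * δ) ^ (n - j) = (1 - 2 * δ) ^ (k - j) * (1 - 2 * δ) ^ (n - k) := by
      rw [← pow_add, enk]
    calc δ ^ k * (1 - 2 * δ) ^ (n - k)
        = δ ^ j * (δ ^ (k - j) * (1 - 2 * δ) ^ (n - k)) := by rw [ek]; ring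
      _ ≤ δ ^ j * ((1 - 2 * δ) ^ (k - j) * (1 - 2 * δ) ^ (n - k)) := by
          apply mul_le_mul_of_nonneg_left ?_ (by positivity)
          apply mul_le_mul_of_nonneg_right ?_ (by positivity)
          exact pow_le_pow_left₀ hδ0.le hδb _
      _ = δ ^ j * (1 - 2 * δ) ^ (n - j) := by rw [eb]
  set G : Finset ℕ := (Finset.range (3 ^ n)).filter (fun i => i ∈ goodIdx δ μ n k) with hG
  have hKeq : Kset δ μ n k = ⋃ i ∈ G, triIco n i := by
    unfold Kset
    ext x
    simp only [Set.mem_iUnion, Finset.mem_coe, hG, Finset.mem_filter, Finset.mem_range,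
      exists_prop]
    constructor
    · rintro ⟨i, hi, hx⟩
      exact ⟨i, ⟨hi.1, hi⟩, hx⟩
    · rintro ⟨i, hi, hx⟩
      exact ⟨i, hi.2, hx⟩
  have hμK : μ (Kset δ μ n k)
      = ∑ i ∈ G, ENNReal.ofReal (δ ^ (n - ternaryOnes i) * (1 - 2 * δ) ^ ternaryOnes i) := by
    have hdisj : ((G : Finset ℕ) : Set ℕ).PairwiseDisjoint (triIco n) :=
      fun i _ j _ hij => triIco_disjoint n hij
    have hmeas : ∀ i ∈ G, MeasurableSet (triIco n i) := fun i _ => measurableSet_Ico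
    rw [hKeq, measure_biUnion_finset hdisj hmeas]
    exact Finset.sum_congr rfl fun i hi =>
      hmass i (Finset.mem_range.mp (Finset.mem_filter.mp hi).1)
  set B : Finset ℕ := (Finset.range (3 ^ n)).filter (fun i => i ∉ goodIdx δ μ n k) with hB
  have htot : (1 : ENNReal)
      = (∑ i ∈ G, ENNReal.ofReal (δ ^ (n - ternaryOnes i) * (1 - 2 * δ) ^ ternaryOnes i))
        + ∑ i ∈ B, ENNReal.ofReal (δ ^ (n - ternaryOnes i) * (1 - 2 * δ) ^ ternaryOnes i) := by
    rw [hG, hB, Finset.sum_filter_add_sum_filter_not]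
    rw [← ENNReal.ofReal_sum_of_nonneg (fun i _ => by positivity)]
    rw [sum_weight δ (1 - 2 * δ) hδ0 n]
    norm_num
  have hGne : (∑ i ∈ G, ENNReal.ofReal (δ ^ (n - ternaryOnes i) * (1 - 2 * δ) ^ ternaryOnes i))
      ≠ ⊤ := by
    exact (ENNReal.sum_lt_top.mpr fun i _ => ENNReal.ofReal_lt_top).ne
  have hsub : 1 - μ (Kset δ μ n k)
      = ∑ i ∈ B, ENNReal.ofReal (δ ^ (n - ternaryOnes i) * (1 - 2 * δ) ^ ternaryOnes i) := by
    rw [hμK, htot, ENNReal.add_sub_cancel_left hGne]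
  rw [hsub]
  have hBsub : B ⊆ (Finset.range (3 ^ n)).filter (fun i => k + 1 ≤ n - ternaryOnes i) := by
    intro i hi
    obtain ⟨hir, hbad⟩ := Finset.mem_filter.mp hi
    rw [Finset.mem_filter]
    refine ⟨hir, ?_⟩
    by_contra h
    exact hbad (hgood i (Finset.mem_range.mp hir) (by omega))
  calc ∑ i ∈ B, ENNReal.ofReal (δ ^ (n - ternaryOnes i) * (1 - 2 * δ) ^ ternaryOnes i)
      ≤ ∑ i ∈ (Finset.range (3 ^ n)).filter (fun i => k + 1 ≤ n - ternaryOnes i),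
        ENNReal.ofReal (δ ^ (n - ternaryOnes i) * (1 - 2 * δ) ^ ternaryOnes i) :=
        Finset.sum_le_sum_of_subset hBsub
    _ = ENNReal.ofReal (∑ i ∈ (Finset.range (3 ^ n)).filter (fun i => k + 1 ≤ n - ternaryOnes i),
        δ ^ (n - ternaryOnes i) * (1 - 2 * δ) ^ ternaryOnes i) :=
        (ENNReal.ofReal_sum_of_nonneg (fun i _ => by positivity)).symm
    _ ≤ ENNReal.ofReal (Real.exp (-2 * n * ((k : ℝ) / n - 2 * δ) ^ 2)) :=
        ENNReal.ofReal_le_ofReal (tail_bound δ hδ0 hδ n k hk1 hk2)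
end
end

section
/- Fix δ ∈ (0,1/3] and integers 0 ≤ k ≤ n with 2δn ≤ k ≤ (2/3)n. Let μ and K(n,k) be as in the triadic construction, and let 𝒢(n,k) be the set of bounded connected components of ℝ ∖ K(n,k) (the gaps of K(n,k)). Then #𝒢(n,k) ≤ e^{k[1 + log(1/δ)]}, and the total length of the gaps satisfies Σ_{I ∈ 𝒢(n,k)} |I| ≤ 1. -/
open MeasureTheory Set

noncomputable section

/-- The gaps of a set `K ⊆ ℝ`: the bounded connected components of `ℝ \ K`. -/
def gaps (K : Set ℝ) : Set (Set ℝ) :=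
  {C | Bornology.IsBounded C ∧ ∃ x ∈ Kᶜ, C = connectedComponentIn Kᶜ x}

namespace GapsAux

/-! ### Digit counting -/

lemma ternaryOnes_le {n i : ℕ} (hi : i < 3 ^ n) : ternaryOnes i ≤ n := by
  rcases eq_or_ne i 0 with rfl | h0
  · simp [ternaryOnes]
  · calc ternaryOnes i ≤ (Nat.digits 3 i).length := List.count_le_length
    _ = Nat.log 3 i + 1 := Nat.digits_len 3 i (by norm_num) h0
    _ ≤ n := by
        have : Nat.log 3 i < n := Nat.log_lt_of_lt_pow h0 hi
        omega

lemma ternaryOnes_mul_add {q r : ℕ} (hr : r < 3) :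
    ternaryOnes (3 * q + r) = ternaryOnes q + if r = 1 then 1 else 0 := by
  rcases Nat.eq_zero_or_pos (3 * q + r) with h | h
  · have hq : q = 0 := by omega
    have hr0 : r = 0 := by omega
    simp [hq, hr0, ternaryOnes]
  · unfold ternaryOnes
    rw [Nat.digits_def' (by norm_num : 1 < 3) h]
    have h1 : (3 * q + r) % 3 = r := by omega
    have h2 : (3 * q + r) / 3 = q := by omega
    rw [h1, h2, List.count_cons]
    by_cases hr1 : r = 1 <;> simp [hr1]

lemma sum_pow_ternaryOnes (w : ℝ) : ∀ n : ℕ,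
    ∑ i ∈ Finset.range (3 ^ n), w ^ ternaryOnes i = (2 + w) ^ n := by
  intro n
  induction n with
  | zero => simp [ternaryOnes]
  | succ n ih =>
    have key : ∑ i ∈ Finset.range (3 ^ (n + 1)), w ^ ternaryOnes i
        = ∑ p ∈ Finset.range (3 ^ n) ×ˢ Finset.range 3, w ^ ternaryOnes (3 * p.1 + p.2) := by
      refine Finset.sum_nbij' (fun a => (a / 3, a % 3)) (fun p => 3 * p.1 + p.2) ?_ ?_ ?_ ?_ ?_
      · intro a ha
        simp only [Finset.mem_range] at ha
        simp only [Finset.mem_product, Finset.mem_range]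
        have h3 : (3:ℕ) ^ (n+1) = 3 * 3 ^ n := by ring
        rw [h3] at ha
        exact ⟨by omega, by omega⟩
      · rintro ⟨q, r⟩ hp
        simp only [Finset.mem_product, Finset.mem_range] at hp
        simp only [Finset.mem_range]
        have h3 : (3:ℕ) ^ (n+1) = 3 * 3 ^ n := by ring
        rw [h3]
        omega
      · intro a _
        show 3 * (a / 3) + a % 3 = a
        omega
      · rintro ⟨q, r⟩ hp
        simp only [Finset.mem_product, Finset.mem_range] at hp
        show ((3 * q + r) / 3, (3 * q + r) % 3) = (q, r)
        have e1 : (3 * q + r) / 3 = q := by omega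
        have e2 : (3 * q + r) % 3 = r := by omega
        rw [e1, e2]
      · intro a _
        show w ^ ternaryOnes a = w ^ ternaryOnes (3 * (a / 3) + a % 3)
        have e : 3 * (a / 3) + a % 3 = a := by omega
        rw [e]
    rw [key, Finset.sum_product]
    have inner : ∀ q ∈ Finset.range (3 ^ n),
        ∑ r ∈ Finset.range 3, w ^ ternaryOnes (3 * q + r) = w ^ ternaryOnes q * (2 + w) := by
      intro q _
      rw [Finset.sum_range_succ, Finset.sum_range_succ, Finset.sum_range_one]
      rw [ternaryOnes_mul_add (by norm_num), ternaryOnes_mul_add (by norm_num),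
        ternaryOnes_mul_add (by norm_num)]
      norm_num [pow_add]
      ring
    rw [Finset.sum_congr rfl inner, ← Finset.sum_mul, ih, pow_succ]

/-! ### Measure of triadic intervals -/

lemma mu_triIco {δ : ℝ} {μ : Measure ℝ} (hμ : ternarySpec δ μ) {n i : ℕ} (hi : i < 3 ^ n) :
    μ (triIco n i) = ENNReal.ofReal (δ ^ (n - ternaryOnes i) * (1 - 2 * δ) ^ ternaryOnes i) := by
  have h := hμ 0 n i hi
  simpa [triIco] using h

lemma good_subset {δ : ℝ} {μ : Measure ℝ} (hδ0 : 0 < δ) (hδ : δ < 1 / 3)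
    (hμ : ternarySpec δ μ) {n k i : ℕ} (hkn : k ≤ n) (h : i ∈ goodIdx δ μ n k) :
    i < 3 ^ n ∧ n ≤ ternaryOnes i + k := by
  obtain ⟨hi, hle⟩ := h
  refine ⟨hi, ?_⟩
  set t := ternaryOnes i with ht'
  have ht : t ≤ n := ternaryOnes_le hi
  rw [mu_triIco hμ hi, ← ht'] at hle
  have hb : 0 < 1 - 2 * δ := by linarith
  have hd : δ < 1 - 2 * δ := by linarith
  have hle' : δ ^ k * (1 - 2 * δ) ^ (n - k) ≤ δ ^ (n - t) * (1 - 2 * δ) ^ t :=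
    (ENNReal.ofReal_le_ofReal_iff (by positivity)).mp hle
  by_contra hc
  push_neg at hc
  obtain ⟨m, hm, hm1⟩ : ∃ m, n - t = k + m ∧ 1 ≤ m := ⟨n - t - k, by omega, by omega⟩
  have hnk : n - k = t + m := by omega
  rw [hm, hnk, pow_add, pow_add] at hle'
  have h1 : δ ^ m < (1 - 2 * δ) ^ m := pow_lt_pow_left₀ hd (le_of_lt hδ0) (by omega)
  have h2 : 0 < δ ^ k := pow_pos hδ0 k
  have h3 : 0 < (1 - 2 * δ) ^ t := pow_pos hb t
  have h5 : (δ ^ k * (1 - 2 * δ) ^ t) * δ ^ m < (δ ^ k * (1 - 2 * δ) ^ t) * (1 - 2 * δ) ^ m :=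
    mul_lt_mul_of_pos_left h1 (mul_pos h2 h3)
  nlinarith

/-! ### Unboundedness helpers -/

lemma not_bounded_of_Ici {a : ℝ} {s : Set ℝ} (h : Set.Ici a ⊆ s) : ¬ Bornology.IsBounded s :=
  fun hb => not_bddAbove_Ici (a := a)
    ((isBounded_iff_bddBelow_bddAbove.mp (hb.subset h)).2)

lemma not_bounded_of_Iic {a : ℝ} {s : Set ℝ} (h : Set.Iic a ⊆ s) : ¬ Bornology.IsBounded s :=
  fun hb => not_bddBelow_Iic (a := a)
    ((isBounded_iff_bddBelow_bddAbove.mp (hb.subset h)).1)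

/-! ### Structure of gaps -/

lemma triIco_subset {n i : ℕ} (hi : i < 3 ^ n) : triIco n i ⊆ Set.Ico (0 : ℝ) 1 := by
  intro x hx
  obtain ⟨hx1, hx2⟩ := hx
  have h3 : (0:ℝ) < 3 ^ n := by positivity
  constructor
  · have : (0:ℝ) ≤ (i : ℝ) / 3 ^ n := by positivity
    linarith
  · have hi' : (i : ℝ) + 1 ≤ 3 ^ n := by
      have : (i : ℝ) + 1 ≤ ((3:ℕ) ^ n : ℕ) := by exact_mod_cast hi
      simpa using this
    have : ((i : ℝ) + 1) / 3 ^ n ≤ 1 := by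
      rw [div_le_one h3]; exact hi'
    linarith

lemma Kset_subset {δ : ℝ} {μ : Measure ℝ} {n k : ℕ} : Kset δ μ n k ⊆ Set.Ico (0 : ℝ) 1 := by
  intro x hx
  simp only [Kset, Set.mem_iUnion] at hx
  obtain ⟨i, hi, hx⟩ := hx
  exact triIco_subset hi.1 hx

variable {δ : ℝ} {μ : Measure ℝ} {n k : ℕ}

lemma gap_nonempty {C : Set ℝ} {K : Set ℝ} (hC : C ∈ gaps K) : C.Nonempty := by
  obtain ⟨-, x, hx, rfl⟩ := hC
  exact ⟨x, mem_connectedComponentIn hx⟩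

lemma gap_subset_compl {C : Set ℝ} {K : Set ℝ} (hC : C ∈ gaps K) : C ⊆ Kᶜ := by
  obtain ⟨-, x, hx, rfl⟩ := hC
  exact connectedComponentIn_subset _ _

lemma gap_eq {C : Set ℝ} {K : Set ℝ} (hC : C ∈ gaps K) {y : ℝ} (hy : y ∈ C) :
    connectedComponentIn Kᶜ y = C := by
  obtain ⟨-, x, hx, rfl⟩ := hC
  exact (connectedComponentIn_eq hy).symm

lemma gap_preconnected {C : Set ℝ} {K : Set ℝ} (hC : C ∈ gaps K) : IsPreconnected C := by
  obtain ⟨-, x, hx, rfl⟩ := hC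
  exact isPreconnected_connectedComponentIn

lemma gap_absorb {C : Set ℝ} {K : Set ℝ} (hC : C ∈ gaps K) {y : ℝ} (hy : y ∈ C)
    {s : Set ℝ} (hs : IsPreconnected s) (hys : y ∈ s) (hsK : s ⊆ Kᶜ) : s ⊆ C := by
  rw [← gap_eq hC hy]
  exact hs.subset_connectedComponentIn hys hsK

lemma gap_subset_Ico {C : Set ℝ} (hC : C ∈ gaps (Kset δ μ n k)) : C ⊆ Set.Ico (0 : ℝ) 1 := by
  intro y hy
  by_contra hyn
  simp only [Set.mem_Ico, not_and_or, not_le, not_lt] at hyn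
  rcases hyn with h0 | h1
  · have hsub : Set.Iic y ⊆ (Kset δ μ n k)ᶜ := by
      intro z hz
      simp only [Set.mem_Iic] at hz
      intro hzK
      have := (Kset_subset hzK).1
      linarith
    have := gap_absorb hC hy isPreconnected_Iic (Set.mem_Iic.mpr le_rfl) hsub
    exact not_bounded_of_Iic this hC.1
  · have hsub : Set.Ici y ⊆ (Kset δ μ n k)ᶜ := by
      intro z hz
      simp only [Set.mem_Ici] at hz
      intro hzK
      have := (Kset_subset hzK).2
      linarith
    have := gap_absorb hC hy isPreconnected_Ici (Set.mem_Ici.mpr le_rfl) hsub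
    exact not_bounded_of_Ici this hC.1

lemma gap_disjoint {C C' : Set ℝ} {K : Set ℝ} (hC : C ∈ gaps K) (hC' : C' ∈ gaps K)
    (hne : C ≠ C') : Disjoint C C' := by
  rw [Set.disjoint_left]
  intro y hy hy'
  exact hne ((gap_eq hC hy).symm.trans (gap_eq hC' hy'))

lemma gap_measurable {C : Set ℝ} {K : Set ℝ} (hC : C ∈ gaps K) : MeasurableSet C :=
  (gap_preconnected hC).ordConnected.measurableSet

/-! ### The index set to the right of a gap -/

/-- Good indices whose interval's right endpoint lies strictly to the right of all of `C`. -/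
def S (δ : ℝ) (μ : Measure ℝ) (n k : ℕ) (C : Set ℝ) : Set ℕ :=
  {i | i ∈ goodIdx δ μ n k ∧ ∀ y ∈ C, y < ((i : ℝ) + 1) / 3 ^ n}

lemma S_nonempty {C : Set ℝ} (hC : C ∈ gaps (Kset δ μ n k))
    (hG : (goodIdx δ μ n k).Nonempty) : (S δ μ n k C).Nonempty := by
  have hGbdd : BddAbove (goodIdx δ μ n k) := ⟨3 ^ n, fun i hi => le_of_lt hi.1⟩
  set i0 := sSup (goodIdx δ μ n k) with hi0
  have hi0G : i0 ∈ goodIdx δ μ n k := Nat.sSup_mem hG hGbdd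
  refine ⟨i0, hi0G, ?_⟩
  intro y hy
  by_contra hlt
  push_neg at hlt
  -- then [y, ∞) misses K, so the component of y is unbounded
  have hsub : Set.Ici y ⊆ (Kset δ μ n k)ᶜ := by
    intro z hz hzK
    simp only [Set.mem_Ici] at hz
    simp only [Kset, Set.mem_iUnion] at hzK
    obtain ⟨j, hj, hzj⟩ := hzK
    have hji : j ≤ i0 := le_csSup hGbdd hj
    have h3 : (0:ℝ) < 3 ^ n := by positivity
    have : z < ((j : ℝ) + 1) / 3 ^ n := hzj.2
    have hle : ((j : ℝ) + 1) / 3 ^ n ≤ ((i0 : ℝ) + 1) / 3 ^ n := by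
      gcongr
    linarith
  have := gap_absorb hC hy isPreconnected_Ici (Set.mem_Ici.mpr le_rfl) hsub
  exact not_bounded_of_Ici this hC.1

/-- Every point of a gap is strictly to the left of interval `sInf (S C)`. -/
lemma gap_lt_inf {C : Set ℝ} (hC : C ∈ gaps (Kset δ μ n k))
    (hG : (goodIdx δ μ n k).Nonempty) {y : ℝ} (hy : y ∈ C) :
    y < ((sInf (S δ μ n k C) : ℕ) : ℝ) / 3 ^ n := by
  obtain ⟨hiG, hilt⟩ := Nat.sInf_mem (S_nonempty hC hG)
  set i := sInf (S δ μ n k C)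
  have h1 : y < ((i : ℝ) + 1) / 3 ^ n := hilt y hy
  have h0 : (0:ℝ) ≤ y := (gap_subset_Ico hC hy).1
  by_contra hge
  push_neg at hge
  have : y ∈ triIco n i := ⟨hge, h1⟩
  have : y ∈ Kset δ μ n k := Set.mem_biUnion hiG this
  exact (gap_subset_compl hC hy) this

lemma gap_inj_aux {C C' : Set ℝ} (hC : C ∈ gaps (Kset δ μ n k)) (hC' : C' ∈ gaps (Kset δ μ n k))
    (hG : (goodIdx δ μ n k).Nonempty)
    (heq : sInf (S δ μ n k C) = sInf (S δ μ n k C'))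
    {x x' : ℝ} (hx : x ∈ C) (hx' : x' ∈ C') (hxx : x ≤ x') : C = C' := by
  by_cases h : Set.Icc x x' ⊆ (Kset δ μ n k)ᶜ
  · have h1 : Set.Icc x x' ⊆ C :=
      gap_absorb hC hx isPreconnected_Icc (Set.left_mem_Icc.mpr hxx) h
    have hx'C : x' ∈ C := h1 (Set.right_mem_Icc.mpr hxx)
    exact (gap_eq hC hx'C).symm.trans (gap_eq hC' hx')
  · rw [Set.not_subset] at h
    obtain ⟨y, hyIcc, hyK⟩ := h
    rw [Set.notMem_compl_iff] at hyK
    simp only [Kset, Set.mem_iUnion] at hyK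
    obtain ⟨j, hjG, hyj⟩ := hyK
    exfalso
    have hjS : j ∈ S δ μ n k C := by
      refine ⟨hjG, ?_⟩
      intro z hz
      by_contra hzge
      push_neg at hzge
      have hyz : y ∈ Set.Icc x z := ⟨hyIcc.1, le_trans (le_of_lt hyj.2) hzge⟩
      have hIcc : Set.Icc x z ⊆ C := ((gap_preconnected hC).ordConnected).out hx hz
      exact (gap_subset_compl hC (hIcc hyz)) (Set.mem_biUnion hjG hyj)
    have hij : sInf (S δ μ n k C) ≤ j := Nat.sInf_le hjS
    have hx'lt : x' < ((sInf (S δ μ n k C') : ℕ) : ℝ) / 3 ^ n := gap_lt_inf hC' hG hx'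
    have h3 : (0:ℝ) < 3 ^ n := by positivity
    have hj1 : (j : ℝ) / 3 ^ n ≤ x' := le_trans hyj.1 hyIcc.2
    have hjlt : (j : ℝ) / 3 ^ n < ((sInf (S δ μ n k C') : ℕ) : ℝ) / 3 ^ n :=
      lt_of_le_of_lt hj1 hx'lt
    have : (j : ℝ) < ((sInf (S δ μ n k C') : ℕ) : ℝ) := by
      have := mul_lt_mul_of_pos_right hjlt h3
      rw [div_mul_cancel₀ _ (ne_of_gt h3), div_mul_cancel₀ _ (ne_of_gt h3)] at this
      exact this
    have hjn : j < sInf (S δ μ n k C') := by exact_mod_cast this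
    omega

lemma gap_inj {C C' : Set ℝ} (hC : C ∈ gaps (Kset δ μ n k)) (hC' : C' ∈ gaps (Kset δ μ n k))
    (hG : (goodIdx δ μ n k).Nonempty)
    (heq : sInf (S δ μ n k C) = sInf (S δ μ n k C')) : C = C' := by
  obtain ⟨x, hx⟩ := gap_nonempty hC
  obtain ⟨x', hx'⟩ := gap_nonempty hC'
  rcases le_total x x' with hxx | hxx
  · exact gap_inj_aux hC hC' hG heq hx hx' hxx
  · exact (gap_inj_aux hC' hC hG heq.symm hx' hx hxx).symm


/-! ### Counting heavy indices -/

lemma card_bound {δ : ℝ} (hδ0 : 0 < δ) {n k : ℕ} (hk1 : 2 * δ * n ≤ (k : ℝ))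
    (h32 : 3 * k ≤ 2 * n) (hk0 : 1 ≤ k) :
    (((Finset.range (3 ^ n)).filter (fun i => n ≤ ternaryOnes i + k)).card : ℝ) ≤
      Real.exp ((k : ℝ) * (1 + Real.log (1 / δ))) := by
  set Bf := (Finset.range (3 ^ n)).filter (fun i => n ≤ ternaryOnes i + k) with hBf
  have hkn : k < n := by omega
  have hK0 : (0:ℝ) < (k:ℝ) := by exact_mod_cast hk0
  have hNK : (k:ℝ) < (n:ℝ) := by exact_mod_cast hkn
  set w : ℝ := 2 * ((n:ℝ) - k) / k with hw
  have hNKpos : (0:ℝ) < (n:ℝ) - k := by linarith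
  have hw1 : 1 ≤ w := by
    rw [hw, le_div_iff₀ hK0]
    have : 3 * (k:ℝ) ≤ 2 * n := by exact_mod_cast h32
    linarith
  have hw0 : (0:ℝ) < w := lt_of_lt_of_le one_pos hw1
  have hstep1 : (Bf.card : ℝ) * w ^ (n - k) ≤ (2 + w) ^ n := by
    calc (Bf.card : ℝ) * w ^ (n - k) = ∑ _i ∈ Bf, w ^ (n - k) := by
          rw [Finset.sum_const, nsmul_eq_mul]
      _ ≤ ∑ i ∈ Bf, w ^ ternaryOnes i := by
          refine Finset.sum_le_sum fun i hi => ?_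
          have hni : n ≤ ternaryOnes i + k := by
            simpa [hBf] using (Finset.mem_filter.mp hi).2
          exact pow_le_pow_right₀ hw1 (by omega)
      _ ≤ ∑ i ∈ Finset.range (3 ^ n), w ^ ternaryOnes i := by
          refine Finset.sum_le_sum_of_subset_of_nonneg (Finset.filter_subset _ _) ?_
          intro i _ _
          positivity
      _ = (2 + w) ^ n := sum_pow_ternaryOnes w n
  have h2w : 2 + w = 2 * (n:ℝ) / k := by
    rw [hw]; field_simp; ring
  have hsplit : ((2:ℝ) + w) ^ n = (2 + w) ^ k * (2 + w) ^ (n - k) := by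
    rw [← pow_add]; congr 1; omega
  have hbase1 : (2 + w) ^ k ≤ (1/δ) ^ k := by
    apply pow_le_pow_left₀ (by linarith)
    rw [h2w, div_le_div_iff₀ hK0 hδ0]
    linarith
  have hbase2 : (2 + w) ^ (n - k) = w ^ (n - k) * ((n:ℝ)/((n:ℝ)-k)) ^ (n - k) := by
    rw [← mul_pow]; congr 1
    rw [h2w, hw]; field_simp
  have hexp : ((n:ℝ)/((n:ℝ)-k)) ^ (n - k) ≤ Real.exp k := by
    have hx : (n:ℝ)/((n:ℝ)-k) = 1 + (k:ℝ)/((n:ℝ)-k) := by field_simp; ring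
    rw [hx]
    have h1 : 1 + (k:ℝ)/((n:ℝ)-k) ≤ Real.exp ((k:ℝ)/((n:ℝ)-k)) := by
      have := Real.add_one_le_exp ((k:ℝ)/((n:ℝ)-k)); linarith
    calc (1 + (k:ℝ)/((n:ℝ)-k)) ^ (n - k) ≤ Real.exp ((k:ℝ)/((n:ℝ)-k)) ^ (n-k) :=
          pow_le_pow_left₀ (by positivity) h1 _
      _ = Real.exp (((n-k : ℕ):ℝ) * ((k:ℝ)/((n:ℝ)-k))) := (Real.exp_nat_mul _ _).symm
      _ = Real.exp k := by
          congr 1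
          have hcast : ((n - k : ℕ) : ℝ) = (n:ℝ) - k := Nat.cast_sub (by omega)
          rw [hcast]; field_simp
  have hfinal : (Bf.card : ℝ) * w ^ (n-k) ≤ ((1/δ)^k * Real.exp k) * w ^ (n-k) := by
    calc (Bf.card : ℝ) * w ^ (n-k) ≤ (2+w)^n := hstep1
      _ = (2+w)^k * ((2+w)^(n-k)) := hsplit
      _ = (2+w)^k * (w^(n-k) * ((n:ℝ)/((n:ℝ)-k))^(n-k)) := by rw [← hbase2]
      _ ≤ (1/δ)^k * (w^(n-k) * Real.exp k) := by
          refine mul_le_mul hbase1 ?_ ?_ ?_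
          · exact mul_le_mul_of_nonneg_left hexp (by positivity)
          · positivity
          · positivity
      _ = ((1/δ)^k * Real.exp k) * w^(n-k) := by ring
  have hcancel : (Bf.card : ℝ) ≤ (1/δ)^k * Real.exp k :=
    le_of_mul_le_mul_right hfinal (pow_pos hw0 (n-k))
  have hrw : Real.exp ((k:ℝ) * (1 + Real.log (1/δ))) = (1/δ)^k * Real.exp k := by
    rw [mul_add, mul_one, Real.exp_add, Real.exp_nat_mul,
      Real.exp_log (show (0:ℝ) < 1/δ by positivity), mul_comm]
  rw [hrw]
  exact hcancel

lemma pow_three_le {n k : ℕ} (hk1' : (2:ℝ)/3 * n ≤ k) :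
    ((3:ℝ) ^ n) ≤ Real.exp ((k:ℝ) * (1 + Real.log 3)) := by
  have hlog : Real.log 3 ≤ 2 := by
    have := Real.log_le_sub_one_of_pos (by norm_num : (0:ℝ) < 3); linarith
  have hlogpos : 0 < Real.log 3 := Real.log_pos (by norm_num)
  have h3 : (3:ℝ)^n = Real.exp ((n:ℝ) * Real.log 3) := by
    rw [← Real.log_pow, Real.exp_log (by positivity)]
  rw [h3]
  apply Real.exp_le_exp.mpr
  have hkk : (0:ℝ) ≤ (k:ℝ) := Nat.cast_nonneg k
  nlinarith [mul_le_mul_of_nonneg_right hk1' (le_of_lt hlogpos),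
    mul_nonneg hkk (by linarith : (0:ℝ) ≤ 2 - Real.log 3)]

end GapsAux


/-- If `2δn ≤ k ≤ (2/3)n` then the number of gaps of `K(n,k)` is at most
`exp(k(1 + log(1/δ)))` and their total length is at most `1`. -/
theorem gaps_card_and_length (δ : ℝ) (hδ0 : 0 < δ) (hδ : δ ≤ 1 / 3)
    (μ : Measure ℝ) (hμ : ternarySpec δ μ) (n k : ℕ)
    (hk1 : 2 * δ * n ≤ (k : ℝ)) (hk2 : (k : ℝ) ≤ 2 / 3 * n) :
    (((gaps (Kset δ μ n k)).ncard : ℝ) ≤ Real.exp ((k : ℝ) * (1 + Real.log (1 / δ)))) ∧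
      ∑' I : gaps (Kset δ μ n k), volume (I : Set ℝ) ≤ 1 := by
  constructor
  · -- counting the gaps
    rcases (gaps (Kset δ μ n k)).eq_empty_or_nonempty with hgap | hgap
    · rw [hgap]
      simp only [Set.ncard_empty, Nat.cast_zero]
      positivity
    · -- the good index set is nonempty
      have hG : (goodIdx δ μ n k).Nonempty := by
        by_contra hGe
        rw [Set.not_nonempty_iff_eq_empty] at hGe
        obtain ⟨C, hC⟩ := hgap
        have hK : Kset δ μ n k = ∅ := by simp [Kset, hGe]
        obtain ⟨hb, x, hx, rfl⟩ := hC
        rw [hK, Set.compl_empty, connectedComponentIn_univ,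
          PreconnectedSpace.connectedComponent_eq_univ] at hb
        exact GapsAux.not_bounded_of_Ici (Set.subset_univ (Set.Ici 0)) hb
      have hGfin : (goodIdx δ μ n k).Finite :=
        (Set.finite_lt_nat (3 ^ n)).subset (fun i hi => hi.1)
      have hcard : (gaps (Kset δ μ n k)).ncard ≤ (goodIdx δ μ n k).ncard :=
        Set.ncard_le_ncard_of_injOn (fun C => sInf (GapsAux.S δ μ n k C))
          (fun C hC => (Nat.sInf_mem (GapsAux.S_nonempty hC hG)).1)
          (fun C hC C' hC' heq => GapsAux.gap_inj hC hC' hG heq)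
          hGfin
      have hGbound : ((goodIdx δ μ n k).ncard : ℝ) ≤
          Real.exp ((k : ℝ) * (1 + Real.log (1 / δ))) := by
        rcases eq_or_lt_of_le hδ with heq | hlt
        · -- δ = 1/3
          have h1 : (goodIdx δ μ n k).ncard ≤ 3 ^ n := by
            have hsub : goodIdx δ μ n k ⊆ ↑(Finset.range (3 ^ n)) := by
              intro i hi
              simp only [Finset.coe_range, Set.mem_Iio]
              exact hi.1
            calc (goodIdx δ μ n k).ncard ≤ (↑(Finset.range (3 ^ n)) : Set ℕ).ncard :=
                  Set.ncard_le_ncard hsub (Finset.finite_toSet _)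
              _ = 3 ^ n := by rw [Set.ncard_coe_finset, Finset.card_range]
          have hk1' : (2:ℝ)/3 * n ≤ k := by rw [heq] at hk1; linarith
          have hlog : Real.log (1 / δ) = Real.log 3 := by rw [heq]; norm_num
          calc ((goodIdx δ μ n k).ncard : ℝ) ≤ ((3:ℝ) ^ n) := by exact_mod_cast h1
            _ ≤ Real.exp ((k:ℝ) * (1 + Real.log 3)) := GapsAux.pow_three_le hk1'
            _ = Real.exp ((k:ℝ) * (1 + Real.log (1 / δ))) := by rw [hlog]
        · -- δ < 1/3
          rcases Nat.eq_zero_or_pos k with hk0 | hk0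
          · -- then n = 0 and there is at most one index
            subst hk0
            have hn0 : n = 0 := by
              by_contra hn
              have hn1 : (1:ℝ) ≤ (n:ℝ) := by exact_mod_cast Nat.one_le_iff_ne_zero.mpr hn
              push_cast at hk1
              nlinarith
            have h1 : (goodIdx δ μ n 0).ncard ≤ 1 := by
              have hsub : goodIdx δ μ n 0 ⊆ {0} := by
                intro i hi
                have := hi.1
                rw [hn0] at this
                simp only [pow_zero] at this
                simp [Nat.lt_one_iff.mp this]
              calc (goodIdx δ μ n 0).ncard ≤ ({0} : Set ℕ).ncard :=
                    Set.ncard_le_ncard hsub (Set.finite_singleton 0)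
                _ = 1 := Set.ncard_singleton 0
            simp only [Nat.cast_zero, zero_mul, Real.exp_zero]
            exact_mod_cast h1
          · have h32 : 3 * k ≤ 2 * n := by
              have : (3:ℝ) * k ≤ 2 * n := by linarith
              exact_mod_cast this
            have hkn : k ≤ n := by omega
            set Bf := (Finset.range (3 ^ n)).filter (fun i => n ≤ ternaryOnes i + k) with hBf
            have hsub : goodIdx δ μ n k ⊆ ↑Bf := by
              intro i hi
              obtain ⟨h1, h2⟩ := GapsAux.good_subset hδ0 hlt hμ hkn hi
              simp only [hBf, Finset.coe_filter, Finset.mem_range, Set.mem_setOf_eq]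
              exact ⟨h1, h2⟩
            calc ((goodIdx δ μ n k).ncard : ℝ) ≤ (Bf.card : ℝ) := by
                  have := Set.ncard_le_ncard hsub (Finset.finite_toSet _)
                  rw [Set.ncard_coe_finset] at this
                  exact_mod_cast this
              _ ≤ Real.exp ((k:ℝ) * (1 + Real.log (1 / δ))) :=
                  GapsAux.card_bound hδ0 hk1 h32 hk0
      calc ((gaps (Kset δ μ n k)).ncard : ℝ) ≤ ((goodIdx δ μ n k).ncard : ℝ) := by
            exact_mod_cast hcard
        _ ≤ Real.exp ((k : ℝ) * (1 + Real.log (1 / δ))) := hGbound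
  · -- total length of the gaps
    rw [ENNReal.tsum_eq_iSup_sum]
    refine iSup_le fun s => ?_
    have hd : Set.PairwiseDisjoint (↑s : Set (gaps (Kset δ μ n k)))
        (fun I : gaps (Kset δ μ n k) => (I : Set ℝ)) := by
      intro I _ J _ hIJ
      exact GapsAux.gap_disjoint I.2 J.2 (fun h => hIJ (Subtype.ext h))
    rw [← measure_biUnion_finset hd (fun I _ => GapsAux.gap_measurable I.2)]
    have hsub : (⋃ I ∈ s, (I : Set ℝ)) ⊆ Set.Icc (0:ℝ) 1 := by
      intro x hx
      simp only [Set.mem_iUnion] at hx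
      obtain ⟨I, _, hxI⟩ := hx
      exact Set.Ico_subset_Icc_self (GapsAux.gap_subset_Ico I.2 hxI)
    calc volume (⋃ I ∈ s, (I : Set ℝ)) ≤ volume (Set.Icc (0:ℝ) 1) := measure_mono hsub
      _ = 1 := by rw [Real.volume_Icc]; norm_num
end
end
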